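/- arXiv:1202.5705 — 5 statements merged into one kernel-verified Lean document; each statement's English description precedes it below -/
import Mathlib

section
/- For every real number s, the regularized series g_\varepsilon(s) converges for each \varepsilon > 0, and g_\varepsilon(s) \to g_0(s) as \varepsilon \to 0^+, i.e. the Gaussian-regularized sums converge pointwise on \mathbb{R} to the sum of the unregularized series. -/
open Filter Topology Real


lemma sin_partial_bdd (s : ℝ) : ∃ C : ℝ, ∀ N : ℕ,
    |∑ p ∈ Finset.range N, Real.sin (2 * Real.pi * ((p : ℝ) + 1) * s)| ≤ C := by
  by_cases hs : ∃ k : ℤ, s = (k : ℝ)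
  · obtain ⟨k, rfl⟩ := hs
    refine ⟨0, fun N => ?_⟩
    have : ∀ p ∈ Finset.range N, Real.sin (2 * Real.pi * ((p : ℝ) + 1) * (k : ℝ)) = 0 := by
      intro p _
      have : 2 * Real.pi * ((p : ℝ) + 1) * (k : ℝ) = ((2 * (p + 1) * k : ℤ) : ℝ) * Real.pi := by
        push_cast; ring
      rw [this, Real.sin_int_mul_pi]
    rw [Finset.sum_congr rfl this]
    simp
  · set z : ℂ := Complex.exp (2 * Real.pi * s * Complex.I) with hz
    have hz1 : z ≠ 1 := by
      intro h
      rw [hz, Complex.exp_eq_one_iff] at h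
      obtain ⟨n, hn⟩ := h
      apply hs
      refine ⟨n, ?_⟩
      have h2 : (2 * Real.pi * s : ℂ) = (n : ℂ) * (2 * Real.pi) := by
        have h2' : (2 * Real.pi * s : ℂ) * Complex.I = ((n : ℂ) * (2 * Real.pi)) * Complex.I := by
          rw [hn]; ring
        exact mul_right_cancel₀ Complex.I_ne_zero h2'
      have h3 : (2 * Real.pi * s : ℝ) = (n : ℝ) * (2 * Real.pi) := by
        exact_mod_cast congrArg Complex.re h2
      have hpi : (2 * Real.pi : ℝ) ≠ 0 := by positivity
      field_simp at h3
      nlinarith [Real.pi_pos]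
    refine ⟨2 / ‖z - 1‖, fun N => ?_⟩
    have key : (∑ p ∈ Finset.range N, Real.sin (2 * Real.pi * ((p : ℝ) + 1) * s))
        = (∑ p ∈ Finset.range N, z ^ (p + 1)).im := by
      rw [Complex.im_sum]
      refine Finset.sum_congr rfl fun p _ => ?_
      have : z ^ (p + 1) = Complex.exp ((2 * Real.pi * ((p : ℝ) + 1) * s : ℝ) * Complex.I) := by
        rw [hz, ← Complex.exp_nat_mul]
        congr 1
        push_cast; ring
      rw [this, Complex.exp_ofReal_mul_I_im]
    rw [key]
    calc |(∑ p ∈ Finset.range N, z ^ (p + 1)).im| ≤ ‖∑ p ∈ Finset.range N, z ^ (p + 1)‖ :=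
          Complex.abs_im_le_norm _
      _ ≤ 2 / ‖z - 1‖ := by
          have habs : ‖z‖ = 1 := by
            rw [hz]
            have : (2 * Real.pi * s : ℂ) * Complex.I = ((2 * Real.pi * s : ℝ) : ℂ) * Complex.I := by
              push_cast; ring
            rw [this, Complex.norm_exp_ofReal_mul_I]
          have hsum : ∑ p ∈ Finset.range N, z ^ (p + 1) = z * ((z ^ N - 1) / (z - 1)) := by
            rw [← geom_sum_eq hz1]
            rw [Finset.mul_sum]
            refine Finset.sum_congr rfl fun p _ => ?_
            ring
          rw [hsum, norm_mul, habs, one_mul, norm_div]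
          have hpos : 0 < ‖z - 1‖ := norm_pos_iff.mpr (sub_ne_zero.mpr hz1)
          gcongr
          calc ‖z ^ N - 1‖ ≤ ‖z ^ N‖ + ‖(1:ℂ)‖ := by
                exact norm_sub_le (z ^ N) (1 : ℂ)
            _ = 2 := by rw [norm_pow, habs, one_pow, norm_one]; norm_num

lemma sin_series_tendsto (s : ℝ) : ∃ g0 : ℝ,
    Tendsto (fun N : ℕ => ∑ p ∈ Finset.range N,
      Real.sin (2 * Real.pi * ((p : ℝ) + 1) * s) / ((p : ℝ) + 1)) atTop (𝓝 g0) := by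
  obtain ⟨C, hC⟩ := sin_partial_bdd s
  have hcs : CauchySeq (fun N : ℕ => ∑ p ∈ Finset.range N,
      (((p : ℝ) + 1)⁻¹) • Real.sin (2 * Real.pi * ((p : ℝ) + 1) * s)) := by
    refine Antitone.cauchySeq_series_mul_of_tendsto_zero_of_bounded (b := C) ?_ ?_ (fun n => ?_)
    · intro m n hmn
      have : ((m : ℝ) + 1) ≤ ((n : ℝ) + 1) := by exact_mod_cast Nat.succ_le_succ hmn
      exact inv_anti₀ (by positivity) this
    · have := tendsto_one_div_add_atTop_nhds_zero_nat (𝕜 := ℝ)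
      simpa [one_div] using this
    · simpa [Real.norm_eq_abs] using hC n
  obtain ⟨g0, hg0⟩ := cauchySeq_tendsto_of_complete hcs
  refine ⟨g0, ?_⟩
  convert hg0 using 2 with N
  refine Finset.sum_congr rfl fun p _ => ?_
  rw [smul_eq_mul, div_eq_inv_mul]

lemma gauss_summable (s : ℝ) {ε : ℝ} (hε : 0 < ε) :
    Summable (fun p : ℕ =>
      Real.sin (2 * Real.pi * ((p : ℝ) + 1) * s) / ((p : ℝ) + 1)
        * Real.exp (-ε * ((p : ℝ) + 1) ^ 2)) := by
  refine Summable.of_norm_bounded (g := fun p : ℕ => Real.exp (-ε) ^ (p + 1)) ?_ (fun p => ?_)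
  · have hr : Real.exp (-ε) < 1 := Real.exp_lt_one_iff.mpr (by linarith)
    have := (summable_geometric_of_lt_one (Real.exp_nonneg _) hr).mul_right (Real.exp (-ε))
    refine this.congr fun p => ?_
    rw [pow_succ]
  · have hp1 : (1 : ℝ) ≤ (p : ℝ) + 1 := by have := Nat.cast_nonneg (α := ℝ) p; linarith
    have hsin : |Real.sin (2 * Real.pi * ((p : ℝ) + 1) * s) / ((p : ℝ) + 1)| ≤ 1 := by
      rw [abs_div, abs_of_nonneg (by positivity : (0:ℝ) ≤ (p : ℝ) + 1)]
      rw [div_le_one (by positivity)]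
      exact (Real.abs_sin_le_one _).trans hp1
    have hexp : Real.exp (-ε * ((p : ℝ) + 1) ^ 2) ≤ Real.exp (-ε) ^ (p + 1) := by
      rw [← Real.exp_nat_mul]
      apply Real.exp_le_exp.mpr
      have h2 : ((p : ℝ) + 1) ≤ ((p : ℝ) + 1) ^ 2 := by nlinarith
      push_cast
      nlinarith
    calc ‖Real.sin (2 * Real.pi * ((p : ℝ) + 1) * s) / ((p : ℝ) + 1)
          * Real.exp (-ε * ((p : ℝ) + 1) ^ 2)‖
        = |Real.sin (2 * Real.pi * ((p : ℝ) + 1) * s) / ((p : ℝ) + 1)|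
          * Real.exp (-ε * ((p : ℝ) + 1) ^ 2) := by
          rw [Real.norm_eq_abs, abs_mul, abs_of_pos (Real.exp_pos _)]
      _ ≤ 1 * (Real.exp (-ε) ^ (p + 1)) := by
          apply mul_le_mul hsin hexp (Real.exp_pos _).le one_pos.le
      _ = Real.exp (-ε) ^ (p + 1) := one_mul _

lemma byparts (a A c : ℕ → ℝ) (hA : ∀ N, A N = ∑ p ∈ Finset.range N, a p)
    (hc0 : Tendsto c atTop (𝓝 0)) (hcd : ∀ p, 0 ≤ c p - c (p + 1)) {g0 : ℝ}
    (hg0 : Tendsto A atTop (𝓝 g0)) {C : ℝ} (hbd : ∀ p, |A p| ≤ C)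
    (hsm : Summable (fun p => a p * c p)) :
    HasSum (fun p => (A (p + 1) - g0) * (c p - c (p + 1)))
      ((∑' p, a p * c p) - g0 * c 0) := by
  have hdsum : HasSum (fun p => c p - c (p + 1)) (c 0) := by
    rw [hasSum_iff_tendsto_nat_of_nonneg hcd]
    have heq : ∀ N, ∑ p ∈ Finset.range N, (c p - c (p + 1)) = c 0 - c N :=
      fun N => Finset.sum_range_sub' c N
    refine (tendsto_congr heq).mpr ?_
    simpa using tendsto_const_nhds.sub hc0
  have hAd : Summable (fun p => A (p + 1) * (c p - c (p + 1))) := by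
    refine Summable.of_norm_bounded (g := fun p => C * (c p - c (p + 1)))
      (hdsum.summable.mul_left C) (fun p => ?_)
    rw [Real.norm_eq_abs, abs_mul, abs_of_nonneg (hcd p)]
    exact mul_le_mul_of_nonneg_right (hbd _) (hcd p)
  have hidT := hAd.hasSum
  set T := ∑' p, A (p + 1) * (c p - c (p + 1)) with hT
  have hid : ∀ N, ∑ p ∈ Finset.range N, a p * c p
      = (∑ p ∈ Finset.range N, A (p + 1) * (c p - c (p + 1))) + A N * c N := by
    intro N
    induction N with
    | zero => simp [hA]
    | succ n ih =>
      rw [Finset.sum_range_succ, Finset.sum_range_succ _ n, ih]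
      have h1 : A (n + 1) = A n + a n := by rw [hA, hA, Finset.sum_range_succ]
      rw [h1]; ring
  have h2 : Tendsto (fun N => ∑ p ∈ Finset.range N, a p * c p) atTop (𝓝 (T + g0 * 0)) := by
    refine (tendsto_congr hid).mpr ?_
    exact hidT.tendsto_sum_nat.add (hg0.mul hc0)
  have hST : (∑' p, a p * c p) = T + g0 * 0 :=
    tendsto_nhds_unique hsm.hasSum.tendsto_sum_nat h2
  rw [hST]
  simp only [mul_zero, add_zero]
  have h3 := hidT.sub (hdsum.mul_left g0)
  have heq2 : (fun p => (A (p + 1) - g0) * (c p - c (p + 1)))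
      = fun p => A (p + 1) * (c p - c (p + 1)) - g0 * (c p - c (p + 1)) := by
    funext p; ring
  rw [heq2]
  exact h3

lemma est (A c : ℕ → ℝ) (hcd : ∀ p, 0 ≤ c p - c (p + 1)) (hc0 : Tendsto c atTop (𝓝 0))
    (hc1 : ∀ p, c p ≤ 1) {g0 C δ' t : ℝ} (hδ' : 0 ≤ δ')
    (hC : ∀ p, |A (p + 1) - g0| ≤ C) (M : ℕ)
    (hM : ∀ p, M ≤ p + 1 → |A (p + 1) - g0| ≤ δ')
    (ht : HasSum (fun p => (A (p + 1) - g0) * (c p - c (p + 1))) t) :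
    |t| ≤ C * (c 0 - c M) + δ' := by
  set u : ℕ → ℝ := fun p => (A (p + 1) - g0) * (c p - c (p + 1)) with hu
  have hdtail : HasSum (fun i => c (i + M) - c (i + M + 1)) (c M) := by
    rw [hasSum_iff_tendsto_nat_of_nonneg (fun i => hcd (i + M))]
    have heq : ∀ N, ∑ i ∈ Finset.range N, (c (i + M) - c (i + M + 1)) = c M - c (N + M) := by
      intro N
      have := Finset.sum_range_sub' (fun i => c (i + M)) N
      simpa [Nat.add_right_comm] using this
    refine (tendsto_congr heq).mpr ?_
    have : Tendsto (fun N : ℕ => c (N + M)) atTop (𝓝 0) := hc0.comp (tendsto_add_atTop_nat M)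
    simpa using tendsto_const_nhds.sub this
  have husum : Summable u := ht.summable
  have hsplit : ∑ i ∈ Finset.range M, u i + ∑' i, u (i + M) = t := by
    rw [husum.sum_add_tsum_nat_add M, ht.tsum_eq]
  have habs_tail_sum : Summable (fun i => |u (i + M)|) := by
    refine Summable.of_nonneg_of_le (fun i => abs_nonneg _) (fun i => ?_)
      (hdtail.summable.mul_left δ')
    rw [hu]
    simp only
    rw [abs_mul, abs_of_nonneg (hcd _)]
    exact mul_le_mul_of_nonneg_right (hM _ (by omega)) (hcd _)
  have htail : |∑' i, u (i + M)| ≤ δ' * c M := by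
    calc |∑' i, u (i + M)| ≤ ∑' i, |u (i + M)| := by
          simpa [Real.norm_eq_abs] using norm_tsum_le_tsum_norm (f := fun i => u (i + M))
            (by simpa [Real.norm_eq_abs] using habs_tail_sum)
      _ ≤ ∑' i, δ' * (c (i + M) - c (i + M + 1)) := by
          refine Summable.tsum_le_tsum (fun i => ?_) habs_tail_sum (hdtail.summable.mul_left δ')
          rw [hu]; simp only
          rw [abs_mul, abs_of_nonneg (hcd _)]
          exact mul_le_mul_of_nonneg_right (hM _ (by omega)) (hcd _)
      _ = δ' * c M := (hdtail.mul_left δ').tsum_eq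
  have hhead : |∑ i ∈ Finset.range M, u i| ≤ C * (c 0 - c M) := by
    calc |∑ i ∈ Finset.range M, u i| ≤ ∑ i ∈ Finset.range M, |u i| :=
          Finset.abs_sum_le_sum_abs _ _
      _ ≤ ∑ i ∈ Finset.range M, C * (c i - c (i + 1)) := by
          refine Finset.sum_le_sum fun i _ => ?_
          rw [hu]; simp only
          rw [abs_mul, abs_of_nonneg (hcd _)]
          exact mul_le_mul_of_nonneg_right (hC _) (hcd _)
      _ = C * (c 0 - c M) := by rw [← Finset.mul_sum, Finset.sum_range_sub' c M]
  have hanti : ∀ n, c (M + n) ≤ c M := by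
    intro n
    induction n with
    | zero => simp
    | succ k ih =>
      have := hcd (M + k)
      have h2 : M + (k + 1) = M + k + 1 := by omega
      rw [h2]; linarith
  have hcM : 0 ≤ c M := by
    have h2 : Tendsto (fun n : ℕ => c (M + n)) atTop (𝓝 0) := by
      refine hc0.comp ?_
      simpa [Nat.add_comm] using tendsto_add_atTop_nat M
    exact le_of_tendsto' h2 hanti
  calc |t| = |∑ i ∈ Finset.range M, u i + ∑' i, u (i + M)| := by rw [hsplit]
    _ ≤ |∑ i ∈ Finset.range M, u i| + |∑' i, u (i + M)| := abs_add_le _ _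
    _ ≤ C * (c 0 - c M) + δ' * c M := add_le_add hhead htail
    _ ≤ C * (c 0 - c M) + δ' := by
        nlinarith [hc1 M, hcM, hδ']

lemma c_tendsto {ε : ℝ} (hε : 0 < ε) :
    Tendsto (fun p : ℕ => Real.exp (-ε * ((p : ℝ) + 1) ^ 2)) atTop (𝓝 0) := by
  have hr : Real.exp (-ε) < 1 := Real.exp_lt_one_iff.mpr (by linarith)
  have hg : Tendsto (fun p : ℕ => Real.exp (-ε) ^ (p + 1)) atTop (𝓝 0) := by
    have := tendsto_pow_atTop_nhds_zero_of_lt_one (Real.exp_nonneg _) hr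
    exact this.comp (tendsto_add_atTop_nat 1)
  refine squeeze_zero (fun p => (Real.exp_pos _).le) (fun p => ?_) hg
  rw [← Real.exp_nat_mul]
  apply Real.exp_le_exp.mpr
  have hp : (0 : ℝ) ≤ (p : ℝ) := Nat.cast_nonneg p
  push_cast
  nlinarith [mul_nonneg (mul_nonneg hε.le (by linarith : (0:ℝ) ≤ (p:ℝ) + 1)) hp]

lemma abel_general (a A : ℕ → ℝ) (hA : ∀ N, A N = ∑ p ∈ Finset.range N, a p) (g0 : ℝ)
    (hg0 : Tendsto A atTop (𝓝 g0))
    (hsm : ∀ ε : ℝ, 0 < ε → Summable (fun p : ℕ => a p * Real.exp (-ε * ((p : ℝ) + 1) ^ 2))) :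
    Tendsto (fun ε : ℝ => ∑' p : ℕ, a p * Real.exp (-ε * ((p : ℝ) + 1) ^ 2))
      (𝓝[>] 0) (𝓝 g0) := by
  -- global bound
  have h1 : Tendsto (fun N => |A N - g0|) atTop (𝓝 0) := by
    have h := (hg0.sub_const g0).abs
    simpa using h
  obtain ⟨C, hCmem⟩ := h1.bddAbove_range
  have hC : ∀ N, |A N - g0| ≤ C := fun N => hCmem (Set.mem_range_self N)
  have hC0 : 0 ≤ C := (abs_nonneg _).trans (hC 0)
  have hCA : ∀ N, |A N| ≤ C + |g0| := by
    intro N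
    calc |A N| = |(A N - g0) + g0| := by ring_nf
      _ ≤ |A N - g0| + |g0| := abs_add_le _ _
      _ ≤ C + |g0| := add_le_add_left (hC N) _
  rw [Metric.tendsto_nhdsWithin_nhds]
  intro δ hδ
  obtain ⟨M, hM⟩ := Metric.tendsto_atTop.mp hg0 (δ / 3) (by linarith)
  set φ : ℝ → ℝ := fun x =>
    C * (Real.exp (-x) - Real.exp (-x * ((M : ℝ) + 1) ^ 2)) + |g0| * (1 - Real.exp (-x))
    with hφdef
  have hφcont : Continuous φ := by fun_prop
  have hφ : Tendsto φ (𝓝 0) (𝓝 0) := by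
    have h0 : φ 0 = 0 := by simp [hφdef]
    exact hφcont.tendsto' 0 0 h0
  obtain ⟨ε0, hε0, hball⟩ := Metric.tendsto_nhds_nhds.mp hφ (δ / 3) (by linarith)
  refine ⟨ε0, hε0, fun ε hεmem hεn => ?_⟩
  have hε : 0 < ε := hεmem
  set c : ℕ → ℝ := fun p => Real.exp (-ε * ((p : ℝ) + 1) ^ 2) with hcdef
  have hcd : ∀ p, 0 ≤ c p - c (p + 1) := by
    intro p
    rw [sub_nonneg, hcdef]
    simp only
    apply Real.exp_le_exp.mpr
    have hp : (0 : ℝ) ≤ (p : ℝ) := Nat.cast_nonneg p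
    push_cast
    nlinarith
  have hc1 : ∀ p, c p ≤ 1 := by
    intro p
    rw [hcdef]
    simp only
    rw [← Real.exp_zero]
    apply Real.exp_le_exp.mpr
    have hp : (0 : ℝ) ≤ (p : ℝ) := Nat.cast_nonneg p
    nlinarith
  have hc0 : Tendsto c atTop (𝓝 0) := c_tendsto hε
  have hkey := byparts a A c hA hc0 hcd hg0 hCA (hsm ε hε)
  have hM' : ∀ p, M ≤ p + 1 → |A (p + 1) - g0| ≤ δ / 3 := by
    intro p hp
    have := hM (p + 1) hp
    rw [Real.dist_eq] at this
    linarith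
  have hest := est A c hcd hc0 hc1 (by linarith : (0:ℝ) ≤ δ / 3) (fun p => hC (p + 1)) M hM' hkey
  -- assemble
  have hc00 : c 0 = Real.exp (-ε) := by norm_num [hcdef]
  have hcM : c M = Real.exp (-ε * ((M : ℝ) + 1) ^ 2) := rfl
  rw [Real.dist_eq]
  set S := ∑' p : ℕ, a p * Real.exp (-ε * ((p : ℝ) + 1) ^ 2) with hSdef
  have hSdef2 : S = ∑' p, a p * c p := rfl
  have hφε : |φ ε| < δ / 3 := by
    have := hball (by simpa [Real.dist_eq] using hεn)
    simpa [Real.dist_eq] using this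
  have hexp1 : Real.exp (-ε) ≤ 1 := by
    rw [← Real.exp_zero]; exact Real.exp_le_exp.mpr (by linarith)
  have hdecomp : S - g0 = (S - g0 * c 0) + g0 * (c 0 - 1) := by ring
  have habs : |S - g0| ≤ |S - g0 * c 0| + |g0| * |c 0 - 1| := by
    rw [hdecomp]
    refine (abs_add_le _ _).trans ?_
    rw [abs_mul]
  have h2 : |S - g0 * c 0| ≤ C * (c 0 - c M) + δ / 3 := hest
  have h3 : |g0| * |c 0 - 1| = |g0| * (1 - c 0) := by
    have h0c : (0:ℝ) ≤ 1 - c 0 := by rw [hc00]; linarith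
    rw [abs_sub_comm, abs_of_nonneg h0c]
  have hφval : φ ε = C * (c 0 - c M) + |g0| * (1 - c 0) := by
    rw [hφdef, hc00, hcM]
  have hφεle : C * (c 0 - c M) + |g0| * (1 - c 0) < δ / 3 := by
    rw [← hφval]
    exact (le_abs_self _).trans_lt hφε
  calc |S - g0| ≤ |S - g0 * c 0| + |g0| * |c 0 - 1| := habs
    _ ≤ C * (c 0 - c M) + δ / 3 + |g0| * (1 - c 0) := by rw [h3]; linarith
    _ < δ / 3 + δ / 3 + δ / 3 := by linarith
    _ ≤ δ := by linarith

/-- For every real `s`, the unregularized series `g₀(s) = ∑_{p≥1} sin(2πps)/p` converges,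
for each `ε > 0` the Gaussian-regularized series `g_ε(s) = ∑_{p≥1} sin(2πps)/p · e^{-εp²}`
is summable, and `g_ε(s) → g₀(s)` as `ε → 0⁺`. -/
theorem regularized_tendsto_unregularized (s : ℝ) :
    ∃ g0 : ℝ,
      Filter.Tendsto
        (fun N : ℕ => ∑ p ∈ Finset.range N,
          Real.sin (2 * Real.pi * ((p : ℝ) + 1) * s) / ((p : ℝ) + 1))
        Filter.atTop (𝓝 g0) ∧
      (∀ ε : ℝ, 0 < ε →
        Summable (fun p : ℕ =>
          Real.sin (2 * Real.pi * ((p : ℝ) + 1) * s) / ((p : ℝ) + 1)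
            * Real.exp (-ε * ((p : ℝ) + 1) ^ 2))) ∧
      Filter.Tendsto
        (fun ε : ℝ => ∑' p : ℕ,
          Real.sin (2 * Real.pi * ((p : ℝ) + 1) * s) / ((p : ℝ) + 1)
            * Real.exp (-ε * ((p : ℝ) + 1) ^ 2))
        (𝓝[>] 0) (𝓝 g0) := by
  obtain ⟨g0, hg0⟩ := sin_series_tendsto s
  refine ⟨g0, hg0, fun ε hε => gauss_summable s hε, ?_⟩
  exact abel_general (fun p => Real.sin (2 * Real.pi * ((p : ℝ) + 1) * s) / ((p : ℝ) + 1))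
    (fun N => ∑ p ∈ Finset.range N,
      Real.sin (2 * Real.pi * ((p : ℝ) + 1) * s) / ((p : ℝ) + 1))
    (fun N => rfl) g0 hg0 (fun ε hε => gauss_summable s hε)
end

section
/- For every s \in (0, 1/2), every \varepsilon \geq 0, and every integer N \geq 1, the tail of the regularized series satisfies \left| \sum_{p=N}^{\infty} \frac{\sin(2\pi p s)}{p} e^{-\varepsilon p^2} \right| \leq \frac{1}{N \sin(\pi s)}. -/
open Filter Topology Real Finset

/-- Bound on partial sums of sin(2πps). -/
lemma sin_sum_bound (s : ℝ) (hs : s ∈ Set.Ioo (0 : ℝ) (1 / 2)) (m n : ℕ) :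
    |∑ p ∈ Finset.Ico m n, Real.sin (2 * Real.pi * (p : ℝ) * s)| ≤ 1 / Real.sin (Real.pi * s) := by
  obtain ⟨hs0, hs2⟩ := hs
  have hpi := Real.pi_pos
  have hsin : 0 < Real.sin (Real.pi * s) :=
    Real.sin_pos_of_pos_of_lt_pi (by positivity) (by nlinarith)
  rcases le_or_gt n m with h | h
  · rw [Finset.Ico_eq_empty (by omega), Finset.sum_empty, abs_zero]
    positivity
  set x : ℂ := Complex.exp ((2 * Real.pi * s : ℝ) * Complex.I) with hx
  have hxim : x.im = Real.sin (2 * Real.pi * s) := Complex.exp_ofReal_mul_I_im _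
  have hsin2 : 0 < Real.sin (2 * Real.pi * s) :=
    Real.sin_pos_of_pos_of_lt_pi (by positivity) (by nlinarith)
  have hx1 : x ≠ 1 := by
    intro hcon
    rw [hcon] at hxim
    simp at hxim
    nlinarith
  have hxp : ∀ p : ℕ, x ^ p = Complex.exp ((2 * Real.pi * (p : ℝ) * s : ℝ) * Complex.I) := by
    intro p
    rw [hx, ← Complex.exp_nat_mul]
    congr 1
    push_cast
    ring
  have hsum : ∑ p ∈ Finset.Ico m n, Real.sin (2 * Real.pi * (p : ℝ) * s)
      = (∑ p ∈ Finset.Ico m n, x ^ p).im := by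
    rw [Complex.im_sum]
    refine Finset.sum_congr rfl fun p _ => ?_
    rw [hxp p, Complex.exp_ofReal_mul_I_im]
  have habs1 : ∀ p : ℕ, ‖x ^ p‖ = 1 := by
    intro p; rw [hxp p]; exact Complex.norm_exp_ofReal_mul_I _
  have hdenom : ‖x - 1‖ = 2 * Real.sin (Real.pi * s) := by
    have hre : (x - 1).re = Real.cos (2 * Real.pi * s) - 1 := by
      rw [hx, Complex.sub_re, Complex.exp_ofReal_mul_I_re, Complex.one_re]
    have him : (x - 1).im = Real.sin (2 * Real.pi * s) := by
      rw [hx, Complex.sub_im, Complex.exp_ofReal_mul_I_im, Complex.one_im, sub_zero]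
    have hsq : (‖x - 1‖) ^ 2 = (2 * Real.sin (Real.pi * s)) ^ 2 := by
      rw [Complex.sq_norm, Complex.normSq_apply, hre, him]
      have h1 : Real.sin (2 * Real.pi * s) ^ 2 + Real.cos (2 * Real.pi * s) ^ 2 = 1 :=
        Real.sin_sq_add_cos_sq _
      have h2 : Real.cos (2 * (Real.pi * s)) = 2 * Real.cos (Real.pi * s) ^ 2 - 1 :=
        Real.cos_two_mul _
      have h3 : Real.sin (Real.pi * s) ^ 2 + Real.cos (Real.pi * s) ^ 2 = 1 :=
        Real.sin_sq_add_cos_sq _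
      have h4 : (2 : ℝ) * (Real.pi * s) = 2 * Real.pi * s := by ring
      rw [h4] at h2
      nlinarith
    have := norm_nonneg (x - 1)
    nlinarith
  rw [hsum]
  calc |(∑ p ∈ Finset.Ico m n, x ^ p).im| ≤ ‖∑ p ∈ Finset.Ico m n, x ^ p‖ :=
        Complex.abs_im_le_norm _
    _ = ‖x ^ n - x ^ m‖ / ‖x - 1‖ := by
        rw [geom_sum_Ico hx1 h.le, norm_div]
    _ ≤ (‖x ^ n‖ + ‖x ^ m‖) / (2 * Real.sin (Real.pi * s)) := by
        rw [hdenom]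
        gcongr
        exact norm_sub_le _ _
    _ = 1 / Real.sin (Real.pi * s) := by rw [habs1, habs1]; ring

/-- Abel summation bound. -/
lemma abel_bound (f z : ℕ → ℝ) (C : ℝ) (hC : 0 ≤ C)
    (hf : ∀ i j, i ≤ j → f j ≤ f i) (hf0 : ∀ i, 0 ≤ f i)
    (hz : ∀ n, |∑ i ∈ Finset.range n, z i| ≤ C) (n : ℕ) :
    |∑ i ∈ Finset.range n, f i * z i| ≤ f 0 * C := by
  rcases Nat.eq_zero_or_pos n with rfl | hn
  · simpa using mul_nonneg (hf0 0) hC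
  have key := Finset.sum_range_by_parts f z n
  simp only [smul_eq_mul] at key
  rw [key]
  have hb : |f (n - 1) * ∑ i ∈ Finset.range n, z i| ≤ f (n - 1) * C := by
    rw [abs_mul, abs_of_nonneg (hf0 _)]
    exact mul_le_mul_of_nonneg_left (hz n) (hf0 _)
  have hterm : ∀ i ∈ Finset.range (n - 1),
      |(f (i + 1) - f i) * ∑ j ∈ Finset.range (i + 1), z j| ≤ (f i - f (i + 1)) * C := by
    intro i _
    rw [abs_mul, abs_sub_comm, abs_of_nonneg (sub_nonneg.mpr (hf i (i + 1) (Nat.le_succ i)))]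
    exact mul_le_mul_of_nonneg_left (hz _) (sub_nonneg.mpr (hf i (i + 1) (Nat.le_succ i)))
  calc |f (n - 1) * ∑ i ∈ Finset.range n, z i -
        ∑ i ∈ Finset.range (n - 1), (f (i + 1) - f i) * ∑ j ∈ Finset.range (i + 1), z j|
      ≤ |f (n - 1) * ∑ i ∈ Finset.range n, z i| +
        |∑ i ∈ Finset.range (n - 1), (f (i + 1) - f i) * ∑ j ∈ Finset.range (i + 1), z j| :=
        abs_sub _ _
    _ ≤ f (n - 1) * C + ∑ i ∈ Finset.range (n - 1), (f i - f (i + 1)) * C := by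
        gcongr
        exact (Finset.abs_sum_le_sum_abs _ _).trans (Finset.sum_le_sum hterm)
    _ = f (n - 1) * C + (f 0 - f (n - 1)) * C := by
        rw [← Finset.sum_mul]
        congr 2
        have := Finset.sum_range_sub' f (n - 1)
        try simp only at this
        rw [this]
    _ = f 0 * C := by ring

/-- For `s ∈ (0, 1/2)`, `ε ≥ 0` and `N ≥ 1`, the tail `∑_{p=N}^∞ sin(2πps)/p · e^{-εp²}`
of the regularized series converges and its sum is bounded by `1/(N sin(πs))`. -/
theorem tail_bound (s : ℝ) (hs : s ∈ Set.Ioo (0 : ℝ) (1 / 2))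
    (ε : ℝ) (hε : 0 ≤ ε) (N : ℕ) (hN : 1 ≤ N) :
    ∃ T : ℝ,
      Filter.Tendsto
        (fun M : ℕ => ∑ p ∈ Finset.Ico N M,
          Real.sin (2 * Real.pi * (p : ℝ) * s) / (p : ℝ) * Real.exp (-ε * (p : ℝ) ^ 2))
        Filter.atTop (𝓝 T) ∧
      |T| ≤ 1 / ((N : ℝ) * Real.sin (Real.pi * s)) := by
  obtain ⟨hs0, hs2⟩ := hs
  have hpi := Real.pi_pos
  have hsin : 0 < Real.sin (Real.pi * s) :=
    Real.sin_pos_of_pos_of_lt_pi (by positivity) (by nlinarith)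
  set b : ℕ → ℝ := fun p => Real.sin (2 * Real.pi * (p : ℝ) * s) with hb
  set term : ℕ → ℝ := fun p =>
    Real.sin (2 * Real.pi * (p : ℝ) * s) / (p : ℝ) * Real.exp (-ε * (p : ℝ) ^ 2) with hterm
  set ft : ℕ → ℝ := fun p => if p = 0 then 1 else Real.exp (-ε * (p : ℝ) ^ 2) / p with hft
  have hterm_eq : ∀ p, term p = ft p * b p := by
    intro p
    rcases Nat.eq_zero_or_pos p with rfl | hp
    · simp [hterm, hft, hb]
    · have : p ≠ 0 := hp.ne'
      simp only [hterm, hft, hb, if_neg this]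
      ring
  have hft_anti : Antitone ft := by
    intro i j hij
    rcases Nat.eq_zero_or_pos i with rfl | hi
    · rcases Nat.eq_zero_or_pos j with rfl | hj
      · exact le_refl _
      · simp only [hft, if_neg hj.ne', if_pos rfl]
        rw [div_le_one (by exact_mod_cast hj)]
        calc Real.exp (-ε * (j : ℝ) ^ 2) ≤ 1 := Real.exp_le_one_iff.mpr
              (by nlinarith [sq_nonneg ((j : ℝ)), mul_nonneg hε (sq_nonneg ((j : ℝ)))])
          _ ≤ (j : ℝ) := by exact_mod_cast hj
    · have hj : 0 < j := lt_of_lt_of_le hi hij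
      simp only [hft, if_neg hi.ne', if_neg hj.ne']
      apply div_le_div₀ (Real.exp_pos _).le
      · apply Real.exp_le_exp.mpr
        have : (i : ℝ) ^ 2 ≤ (j : ℝ) ^ 2 := by
          have : (i : ℝ) ≤ j := by exact_mod_cast hij
          nlinarith [Nat.cast_nonneg (α := ℝ) i]
        nlinarith
      · exact_mod_cast hi
      · exact_mod_cast hij
  have hft_nonneg : ∀ p, 0 ≤ ft p := by
    intro p
    rcases Nat.eq_zero_or_pos p with rfl | hp
    · simp [hft]
    · simp only [hft, if_neg hp.ne']
      positivity
  have hft0 : Tendsto ft atTop (𝓝 0) := by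
    apply squeeze_zero' (Eventually.of_forall hft_nonneg)
      (g := fun n : ℕ => 1 / (n : ℝ))
    · filter_upwards [eventually_ge_atTop 1] with n hn
      simp only [hft, if_neg (Nat.one_le_iff_ne_zero.mp hn)]
      apply div_le_div₀ (by norm_num) (Real.exp_le_one_iff.mpr
        (by nlinarith [mul_nonneg hε (sq_nonneg ((n : ℝ)))])) (by exact_mod_cast hn) le_rfl
    · exact tendsto_one_div_atTop_nhds_zero_nat
  have hzb : ∀ n, ‖∑ i ∈ Finset.range n, b i‖ ≤ 1 / Real.sin (Real.pi * s) := by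
    intro n
    rw [Real.norm_eq_abs, Finset.range_eq_Ico]
    exact sin_sum_bound s ⟨hs0, hs2⟩ 0 n
  have hC : CauchySeq (fun n => ∑ i ∈ Finset.range n, ft i • b i) :=
    hft_anti.cauchySeq_series_mul_of_tendsto_zero_of_bounded hft0 hzb
  obtain ⟨L, hL⟩ := cauchySeq_tendsto_of_complete hC
  simp only [smul_eq_mul] at hL
  -- the Ico sums converge to L - (partial sum up to N)
  have hIco : ∀ M, N ≤ M → ∑ p ∈ Finset.Ico N M, term p =
      (∑ i ∈ Finset.range M, ft i * b i) - ∑ i ∈ Finset.range N, ft i * b i := by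
    intro M hM
    rw [← Finset.sum_Ico_eq_sub _ hM]
    exact Finset.sum_congr rfl fun p _ => hterm_eq p
  have hT : Tendsto (fun M : ℕ => ∑ p ∈ Finset.Ico N M, term p) atTop
      (𝓝 (L - ∑ i ∈ Finset.range N, ft i * b i)) := by
    apply Tendsto.congr' _ (hL.sub_const _)
    filter_upwards [eventually_ge_atTop N] with M hM
    exact (hIco M hM).symm
  refine ⟨L - ∑ i ∈ Finset.range N, ft i * b i, hT, ?_⟩
  -- uniform bound on partial Ico sums
  have hbound : ∀ M : ℕ, |∑ p ∈ Finset.Ico N M, term p| ≤ 1 / ((N : ℝ) * Real.sin (Real.pi * s)) := by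
    intro M
    have hNpos : (0 : ℝ) < N := by exact_mod_cast hN
    rcases le_or_gt M N with h | h
    · rw [Finset.Ico_eq_empty (by omega), Finset.sum_empty, abs_zero]
      positivity
    · rw [Finset.sum_Ico_eq_sum_range]
      set f : ℕ → ℝ := fun i => Real.exp (-ε * ((N + i : ℕ) : ℝ) ^ 2) / ((N + i : ℕ) : ℝ) with hf
      set z : ℕ → ℝ := fun i => b (N + i) with hz
      have heq : ∀ i, term (N + i) = f i * z i := by
        intro i
        have hpos : (0 : ℝ) < ((N + i : ℕ) : ℝ) := by positivity
        simp only [hterm, hf, hz, hb]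
        ring
      rw [Finset.sum_congr rfl fun i _ => heq i]
      have hfa : ∀ i j, i ≤ j → f j ≤ f i := by
        intro i j hij
        simp only [hf]
        apply div_le_div₀ (Real.exp_pos _).le
        · apply Real.exp_le_exp.mpr
          have h1 : ((N + i : ℕ) : ℝ) ≤ ((N + j : ℕ) : ℝ) := by exact_mod_cast by omega
          have h2 : (0 : ℝ) ≤ ((N + i : ℕ) : ℝ) := by positivity
          have h3 : ((N + i : ℕ) : ℝ) ^ 2 ≤ ((N + j : ℕ) : ℝ) ^ 2 := by nlinarith
          nlinarith [mul_le_mul_of_nonneg_left h3 hε]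
        · positivity
        · exact_mod_cast by omega
      have hf0 : ∀ i, 0 ≤ f i := by
        intro i; simp only [hf]; positivity
      have hzsum : ∀ n, |∑ i ∈ Finset.range n, z i| ≤ 1 / Real.sin (Real.pi * s) := by
        intro n
        have : ∑ i ∈ Finset.range n, z i = ∑ p ∈ Finset.Ico N (N + n), b p := by
          rw [Finset.sum_Ico_eq_sum_range]
          simp [hz]
        rw [this]
        exact sin_sum_bound s ⟨hs0, hs2⟩ N (N + n)
      calc |∑ i ∈ Finset.range (M - N), f i * z i| ≤ f 0 * (1 / Real.sin (Real.pi * s)) :=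
            abel_bound f z _ (by positivity) hfa hf0 hzsum _
        _ ≤ (1 / (N : ℝ)) * (1 / Real.sin (Real.pi * s)) := by
            apply mul_le_mul_of_nonneg_right _ (by positivity)
            simp only [hf, Nat.add_zero]
            apply div_le_div₀ (by positivity) (Real.exp_le_one_iff.mpr
              (by nlinarith [mul_nonneg hε (sq_nonneg ((N : ℝ)))])) hNpos le_rfl
        _ = 1 / ((N : ℝ) * Real.sin (Real.pi * s)) := by
            rw [div_mul_div_comm, one_mul]
  exact le_of_tendsto hT.abs (Eventually.of_forall hbound)
end

section
/- There is a uniform bound on the regularized sums: for every s \in \mathbb{R} and every \varepsilon \in [0, 1], one has |g_\varepsilon(s)| \leq \frac{2\pi}{1 - e^{-\pi^2}} (where g_0 denotes the unregularized sum). -/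
open Filter Topology Real

/- Telescoping sum over `Ico`. -/
private lemma tele_sum (c : ℕ → ℝ) (P N : ℕ) (h : P ≤ N) :
    ∑ j ∈ Finset.Ico P N, (c j - c (j + 1)) = c P - c N := by
  induction N, h using Nat.le_induction with
  | base => simp
  | succ N hPN ih => rw [Finset.sum_Ico_succ_top hPN, ih]; ring

/- Abel summation identity over `Ico`. -/
private lemma abel_id (A c : ℕ → ℝ) (P N : ℕ) (h : P ≤ N) :
    ∑ j ∈ Finset.Ico P N, (A (j + 1) - A j) * c j
      = A N * c N - A P * c P + ∑ j ∈ Finset.Ico P N, A (j + 1) * (c j - c (j + 1)) := by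
  induction N, h using Nat.le_induction with
  | base => simp
  | succ N hPN ih =>
    rw [Finset.sum_Ico_succ_top hPN, Finset.sum_Ico_succ_top hPN, ih]; ring

/- Abel summation bound: decreasing nonnegative weights against bounded partial sums. -/
private lemma abel_bound_s3 (A c : ℕ → ℝ) (M : ℝ) (hA : ∀ k, |A k| ≤ M)
    (hc0 : ∀ j, 0 ≤ c j) (hcd : ∀ j, c (j + 1) ≤ c j) (P N : ℕ) (h : P ≤ N) :
    |∑ j ∈ Finset.Ico P N, (A (j + 1) - A j) * c j| ≤ 2 * M * c P := by
  have hanti : Antitone c := antitone_nat_of_succ_le hcd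
  have hM : 0 ≤ M := le_trans (abs_nonneg _) (hA 0)
  rw [abel_id A c P N h]
  have h1 : |A N * c N - A P * c P| ≤ M * c N + M * c P := by
    have := abs_sub (A N * c N) (A P * c P)
    have e1 : |A N * c N| ≤ M * c N := by
      rw [abs_mul, abs_of_nonneg (hc0 N)]
      exact mul_le_mul_of_nonneg_right (hA N) (hc0 N)
    have e2 : |A P * c P| ≤ M * c P := by
      rw [abs_mul, abs_of_nonneg (hc0 P)]
      exact mul_le_mul_of_nonneg_right (hA P) (hc0 P)
    linarith
  have h2 : |∑ j ∈ Finset.Ico P N, A (j + 1) * (c j - c (j + 1))| ≤ M * (c P - c N) := by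
    calc |∑ j ∈ Finset.Ico P N, A (j + 1) * (c j - c (j + 1))|
        ≤ ∑ j ∈ Finset.Ico P N, |A (j + 1) * (c j - c (j + 1))| :=
          Finset.abs_sum_le_sum_abs _ _
      _ ≤ ∑ j ∈ Finset.Ico P N, M * (c j - c (j + 1)) := by
          apply Finset.sum_le_sum
          intro j _
          rw [abs_mul, abs_of_nonneg (by linarith [hcd j] : (0:ℝ) ≤ c j - c (j + 1))]
          exact mul_le_mul_of_nonneg_right (hA _) (by linarith [hcd j])
      _ = M * (c P - c N) := by rw [← Finset.mul_sum, tele_sum c P N h]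
  calc |A N * c N - A P * c P + ∑ j ∈ Finset.Ico P N, A (j + 1) * (c j - c (j + 1))|
      ≤ |A N * c N - A P * c P| + |∑ j ∈ Finset.Ico P N, A (j + 1) * (c j - c (j + 1))| :=
        abs_add_le _ _
    _ ≤ (M * c N + M * c P) + M * (c P - c N) := by linarith
    _ = 2 * M * c P := by ring

/- Dirichlet kernel bound for the sine sums, `t ∈ (0, 1/2]`. -/
private lemma dirichlet_bound (t : ℝ) (ht0 : 0 < t) (ht2 : t ≤ 1 / 2) (k : ℕ) :
    |∑ j ∈ Finset.range k, Real.sin (2 * π * ((j : ℝ) + 1) * t)| ≤ 1 / (2 * t) := by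
  have hπ := Real.pi_pos
  have hsin : 2 * t ≤ Real.sin (π * t) := by
    have h := Real.mul_le_sin (x := π * t) (by positivity) (by nlinarith)
    calc 2 * t = 2 / π * (π * t) := by field_simp
      _ ≤ Real.sin (π * t) := h
  have hsinpos : 0 < Real.sin (π * t) := lt_of_lt_of_le (by positivity) hsin
  have key : 2 * Real.sin (π * t) * (∑ j ∈ Finset.range k, Real.sin (2 * π * ((j : ℝ) + 1) * t))
      = Real.cos ((2 * (0:ℝ) + 1) * π * t) - Real.cos ((2 * (k:ℝ) + 1) * π * t) := by
    rw [Finset.mul_sum]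
    rw [show (Real.cos ((2 * (0:ℝ) + 1) * π * t) - Real.cos ((2 * (k:ℝ) + 1) * π * t))
        = (fun j : ℕ => Real.cos ((2 * (j:ℝ) + 1) * π * t)) 0
          - (fun j : ℕ => Real.cos ((2 * (j:ℝ) + 1) * π * t)) k by push_cast; ring_nf]
    rw [← Finset.sum_range_sub' (fun j : ℕ => Real.cos ((2 * (j:ℝ) + 1) * π * t)) k]
    apply Finset.sum_congr rfl
    intro j _
    have := Real.cos_sub_cos ((2 * (j:ℝ) + 1) * π * t) ((2 * (j:ℝ) + 3) * π * t)
    rw [show ((2 * (j:ℝ) + 1) * π * t + (2 * (j:ℝ) + 3) * π * t) / 2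
        = 2 * π * ((j : ℝ) + 1) * t by ring,
      show ((2 * (j:ℝ) + 1) * π * t - (2 * (j:ℝ) + 3) * π * t) / 2 = -(π * t) by ring,
      Real.sin_neg] at this
    push_cast
    rw [show (2 * ((j:ℝ) + 1) + 1) * π * t = (2 * (j:ℝ) + 3) * π * t by ring]
    linarith [this]
  have hb : |2 * Real.sin (π * t) * (∑ j ∈ Finset.range k, Real.sin (2 * π * ((j : ℝ) + 1) * t))|
      ≤ 2 := by
    rw [key]
    have c1 := Real.neg_one_le_cos ((2 * (0:ℝ) + 1) * π * t)
    have c2 := Real.neg_one_le_cos ((2 * (k:ℝ) + 1) * π * t)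
    have c3 := Real.cos_le_one ((2 * (0:ℝ) + 1) * π * t)
    have c4 := Real.cos_le_one ((2 * (k:ℝ) + 1) * π * t)
    rw [abs_le]; constructor <;> linarith
  rw [abs_mul, abs_of_nonneg (by positivity : (0:ℝ) ≤ 2 * Real.sin (π * t))] at hb
  have ha := abs_nonneg (∑ j ∈ Finset.range k, Real.sin (2 * π * ((j : ℝ) + 1) * t))
  rw [le_div_iff₀ (by positivity : (0:ℝ) < 2 * t)]
  nlinarith

/- Main uniform estimate, for `t ∈ [0, 1/2]`. -/
private lemma main_bound (ε : ℝ) (hε : 0 ≤ ε) (t : ℝ) (ht0 : 0 ≤ t) (ht2 : t ≤ 1 / 2) (N : ℕ) :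
    |∑ j ∈ Finset.range N,
        Real.sin (2 * π * ((j : ℝ) + 1) * t) / ((j : ℝ) + 1) * Real.exp (-ε * ((j : ℝ) + 1) ^ 2)|
      ≤ 2 + π := by
  have hπ := Real.pi_pos
  rcases eq_or_lt_of_le ht0 with h0 | ht0
  · simp [← h0]; positivity
  -- notations
  set c : ℕ → ℝ := fun j => Real.exp (-ε * ((j : ℝ) + 1) ^ 2) / ((j : ℝ) + 1) with hc
  set a : ℕ → ℝ := fun j => Real.sin (2 * π * ((j : ℝ) + 1) * t) with hadef
  set A : ℕ → ℝ := fun k => ∑ j ∈ Finset.range k, a j with hA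
  have hterm : ∀ j : ℕ,
      Real.sin (2 * π * ((j : ℝ) + 1) * t) / ((j : ℝ) + 1) * Real.exp (-ε * ((j : ℝ) + 1) ^ 2)
        = a j * c j := by
    intro j; simp only [hc, hadef]; ring
  have hc0 : ∀ j, 0 ≤ c j := fun j => by positivity
  have hcd : ∀ j, c (j + 1) ≤ c j := by
    intro j
    simp only [hc]
    push_cast
    apply div_le_div₀ (by positivity) ?_ (by positivity) (by linarith)
    apply Real.exp_le_exp.2
    nlinarith [mul_nonneg hε (Nat.cast_nonneg (α := ℝ) j)]
  have hcle : ∀ j : ℕ, c j ≤ 1 / ((j : ℝ) + 1) := by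
    intro j
    simp only [hc]
    apply div_le_div₀ (by norm_num) ?_ (by positivity) (le_refl _)
    apply Real.exp_le_one_iff.2
    nlinarith [sq_nonneg ((j:ℝ) + 1)]
  have hAb : ∀ k, |A k| ≤ 1 / (2 * t) := fun k => dirichlet_bound t ht0 ht2 k
  have haA : ∀ j : ℕ, a j = A (j + 1) - A j := by
    intro j; simp only [hA, Finset.sum_range_succ]; ring
  -- head estimate
  have head : ∀ m : ℕ, (m : ℝ) * t ≤ 1 / π →
      |∑ j ∈ Finset.range m, a j * c j| ≤ 2 := by
    intro m hm
    calc |∑ j ∈ Finset.range m, a j * c j|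
        ≤ ∑ j ∈ Finset.range m, |a j * c j| := Finset.abs_sum_le_sum_abs _ _
      _ ≤ ∑ j ∈ Finset.range m, 2 * π * t := by
          apply Finset.sum_le_sum
          intro j _
          rw [abs_mul, abs_of_nonneg (hc0 j)]
          have h1 : |a j| ≤ 2 * π * ((j : ℝ) + 1) * t := by
            simp only [hadef]
            exact (Real.abs_sin_le_abs).trans
              (le_of_eq (abs_of_nonneg (by positivity : (0:ℝ) ≤ 2 * π * ((j:ℝ) + 1) * t)))
          calc |a j| * c j ≤ (2 * π * ((j : ℝ) + 1) * t) * (1 / ((j : ℝ) + 1)) := by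
                apply mul_le_mul h1 (hcle j) (hc0 j) (by positivity)
            _ = 2 * π * t := by field_simp
      _ = (m : ℝ) * (2 * π * t) := by rw [Finset.sum_const, Finset.card_range]; ring
      _ ≤ 2 := by
          have : (m : ℝ) * (2 * π * t) = 2 * π * ((m:ℝ) * t) := by ring
          rw [this]
          calc 2 * π * ((m:ℝ) * t) ≤ 2 * π * (1 / π) := by
                apply mul_le_mul_of_nonneg_left hm (by positivity)
            _ = 2 := by field_simp
  set P : ℕ := Nat.floor (1 / (π * t)) with hP
  have hP1 : (P : ℝ) ≤ 1 / (π * t) := Nat.floor_le (by positivity)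
  have hP2 : 1 / (π * t) < (P : ℝ) + 1 := by
    have := Nat.lt_floor_add_one (1 / (π * t)); push_cast at this ⊢; linarith
  have hPt : (P : ℝ) * t ≤ 1 / π := by
    calc (P : ℝ) * t ≤ (1 / (π * t)) * t := by
          apply mul_le_mul_of_nonneg_right hP1 ht0.le
      _ = 1 / π := by field_simp
  simp only [hterm]
  rcases le_or_gt N P with hNP | hNP
  · -- whole sum is "head"
    have : (N : ℝ) * t ≤ 1 / π := by
      refine le_trans ?_ hPt
      apply mul_le_mul_of_nonneg_right (by exact_mod_cast hNP) ht0.le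
    linarith [head N this]
  · -- split at P
    have hsplit : ∑ j ∈ Finset.range N, a j * c j
        = (∑ j ∈ Finset.range P, a j * c j) + ∑ j ∈ Finset.Ico P N, a j * c j :=
      (Finset.sum_range_add_sum_Ico _ hNP.le).symm
    have htail : |∑ j ∈ Finset.Ico P N, a j * c j| ≤ π := by
      have hrw : ∑ j ∈ Finset.Ico P N, a j * c j
          = ∑ j ∈ Finset.Ico P N, (A (j + 1) - A j) * c j := by
        apply Finset.sum_congr rfl; intro j _; rw [haA j]
      rw [hrw]
      have hb := abel_bound_s3 A c (1 / (2 * t)) hAb hc0 hcd P N hNP.le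
      have hcP : c P < π * t := lt_of_le_of_lt (hcle P) (by
        rw [div_lt_iff₀ (by positivity : (0:ℝ) < (P:ℝ) + 1)]
        rw [div_lt_iff₀ (by positivity : (0:ℝ) < π * t)] at hP2
        linarith)
      calc |∑ j ∈ Finset.Ico P N, (A (j + 1) - A j) * c j|
          ≤ 2 * (1 / (2 * t)) * c P := hb
        _ = c P / t := by field_simp
        _ ≤ (π * t) / t := (div_le_div_iff_of_pos_right ht0).2 hcP.le
        _ = π := by field_simp
    have hhead := head P hPt
    rw [hsplit]
    calc |(∑ j ∈ Finset.range P, a j * c j) + ∑ j ∈ Finset.Ico P N, a j * c j|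
        ≤ |∑ j ∈ Finset.range P, a j * c j| + |∑ j ∈ Finset.Ico P N, a j * c j| := abs_add_le _ _
      _ ≤ 2 + π := by linarith

/-- Uniform bound on the regularized sums: for every `s ∈ ℝ` and `ε ∈ [0,1]`, if the
series `∑_{p≥1} sin(2πps)/p · e^{-εp²}` converges (in the sense of partial sums) to `G`,
then `|G| ≤ 2π/(1 - e^{-π²})`.  (For `ε = 0` this is the unregularized sum.) -/
theorem uniform_bound (s ε : ℝ) (hε0 : 0 ≤ ε) (hε1 : ε ≤ 1) (G : ℝ)
    (hG : Filter.Tendsto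
      (fun N : ℕ => ∑ p ∈ Finset.range N,
        Real.sin (2 * Real.pi * ((p : ℝ) + 1) * s) / ((p : ℝ) + 1)
          * Real.exp (-ε * ((p : ℝ) + 1) ^ 2))
      Filter.atTop (𝓝 G)) :
    |G| ≤ 2 * Real.pi / (1 - Real.exp (-Real.pi ^ 2)) := by
  have hπ := Real.pi_pos
  obtain ⟨t, ht0, ht2, σ, hσ, hsin⟩ :
      ∃ t : ℝ, 0 ≤ t ∧ t ≤ 1 / 2 ∧ ∃ σ : ℝ, (σ = 1 ∨ σ = -1) ∧
        ∀ q : ℕ, Real.sin (2 * π * ((q : ℝ) + 1) * s) = σ * Real.sin (2 * π * ((q : ℝ) + 1) * t) := by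
    set f := Int.fract s with hf
    have hf' : f = s - (⌊s⌋ : ℝ) := by rw [hf, ← Int.self_sub_floor]
    have hf0 : 0 ≤ f := by rw [hf]; exact Int.fract_nonneg s
    have hf1 : f < 1 := by rw [hf]; exact Int.fract_lt_one s
    have hq : ∀ q : ℕ, Real.sin (2 * π * ((q : ℝ) + 1) * s)
        = Real.sin (2 * π * ((q : ℝ) + 1) * f) := by
      intro q
      have h : 2 * π * ((q : ℝ) + 1) * s
          = 2 * π * ((q : ℝ) + 1) * f + ((((q : ℤ) + 1) * ⌊s⌋ : ℤ) : ℝ) * (2 * π) := by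
        rw [hf']; push_cast; ring
      rw [h, Real.sin_add_int_mul_two_pi]
    rcases le_or_gt f (1 / 2) with hfle | hfgt
    · exact ⟨f, hf0, hfle, 1, Or.inl rfl, fun q => by rw [hq q, one_mul]⟩
    · refine ⟨1 - f, by linarith, by linarith, -1, Or.inr rfl, fun q => ?_⟩
      rw [hq q]
      have h : 2 * π * ((q : ℝ) + 1) * f
          = ((((q : ℤ) + 1) : ℤ) : ℝ) * (2 * π) - 2 * π * ((q : ℝ) + 1) * (1 - f) := by
        push_cast; ring
      rw [h, Real.sin_int_mul_two_pi_sub]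
      ring
  have key : ∀ N : ℕ, |∑ p ∈ Finset.range N,
      Real.sin (2 * Real.pi * ((p : ℝ) + 1) * s) / ((p : ℝ) + 1)
        * Real.exp (-ε * ((p : ℝ) + 1) ^ 2)| ≤ 2 + π := by
    intro N
    have h : ∑ p ∈ Finset.range N,
        Real.sin (2 * Real.pi * ((p : ℝ) + 1) * s) / ((p : ℝ) + 1)
          * Real.exp (-ε * ((p : ℝ) + 1) ^ 2)
        = σ * ∑ p ∈ Finset.range N,
            Real.sin (2 * π * ((p : ℝ) + 1) * t) / ((p : ℝ) + 1)
              * Real.exp (-ε * ((p : ℝ) + 1) ^ 2) := by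
      rw [Finset.mul_sum]; apply Finset.sum_congr rfl; intro p _; rw [hsin p]; ring
    rw [h, abs_mul]
    have hσ1 : |σ| = 1 := by rcases hσ with h' | h' <;> simp [h']
    rw [hσ1, one_mul]
    exact main_bound ε hε0 t ht0 ht2 N
  have hG2 : |G| ≤ 2 + π := le_of_tendsto hG.abs (Filter.Eventually.of_forall key)
  have he1 : Real.exp (-π ^ 2) < 1 := Real.exp_lt_one_iff.2 (by nlinarith)
  have he0 : 0 < Real.exp (-π ^ 2) := Real.exp_pos _
  have hd : 0 < 1 - Real.exp (-π ^ 2) := by linarith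
  rw [le_div_iff₀ hd]
  have habs : 0 ≤ |G| := abs_nonneg G
  nlinarith [Real.pi_gt_three]
end

section
/- Let f : [0, \infty) \to \mathbb{R} be continuous and bounded, let \varphi : \mathbb{R} \to \mathbb{R} be a Schwartz function, let \gamma \in \mathbb{R}, \lambda > 0, \eta > 0 and \delta \in [0, \eta]. Then \sum_{n \in \mathbb{Z}} \int_{\mathbb{R}^2} \frac{f\big(\sqrt{|x|^2 + n^2 + \delta^2}\big)}{\sqrt{|x|^2 + n^2 + \delta^2}} \,(|x|^2 + n^2 + \eta^2)^{\gamma/2}\, \varphi\big(\lambda \sqrt{|x|^2 + n^2 + \eta^2}\big)\, d^2x = 4\pi \int_0^{\infty} \left(s^2 + \frac{s\, g(s)}{\pi}\right) \frac{f\big(\sqrt{s^2 + \delta^2}\big)}{\sqrt{s^2 + \delta^2}} \,(s^2 + \eta^2)^{\gamma/2}\, \varphi\big(\lambda \sqrt{s^2 + \eta^2}\big)\, ds. -/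
open Filter Topology Real MeasureTheory Classical

/-- The function `g(s) = π(1/2 - {s})` for non-integer `s`, and `0` for integer `s`. -/
noncomputable def g (s : ℝ) : ℝ :=
  if ∃ n : ℤ, (n : ℝ) = s then 0 else Real.pi * (1 / 2 - Int.fract s)

open Set Metric

lemma aux_ball : (volume (Metric.ball (0 : EuclideanSpace ℝ (Fin 2)) 1)).toReal = Real.pi := by
  rw [EuclideanSpace.volume_ball]
  norm_num [Real.Gamma_two, Real.sq_sqrt Real.pi_pos.le, ENNReal.toReal_ofReal Real.pi_pos.le]

lemma aux_intbound {a : ℝ} (ha : 0 ≤ a) :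
    IntegrableOn (fun s : ℝ => ((1+s)^3)⁻¹) (Set.Ioi a) ∧
      ∫ s in Set.Ioi a, ((1+s)^3)⁻¹ = ((2:ℝ) * (1+a)^2)⁻¹ := by
  have hderiv : ∀ x ∈ Set.Ioi a, HasDerivAt (fun s : ℝ => -((1+s)^2)⁻¹/2) (((1+x)^3)⁻¹) x := by
    intro x hx
    have hx0 : (0:ℝ) < 1 + x := by have := hx.out; linarith
    have h1 : HasDerivAt (fun s : ℝ => (1+s)^2) (2*(1+x)) x := by
      have := ((hasDerivAt_id x).const_add (1:ℝ)).fun_pow 2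
      simpa using this
    have h2 := (h1.fun_inv (by positivity)).fun_neg.div_const 2
    refine h2.congr_deriv ?_
    field_simp
  have hpos : ∀ x ∈ Set.Ioi a, (0:ℝ) ≤ ((1+x)^3)⁻¹ := by
    intro x hx
    have hh : (0:ℝ) < 1 + x := by have := hx.out; linarith
    positivity
  have hcont : ContinuousWithinAt (fun s : ℝ => -((1+s)^2)⁻¹/2) (Set.Ici a) a := by
    have hx0 : (0:ℝ) < 1 + a := by linarith
    apply ContinuousAt.continuousWithinAt
    have : ContinuousAt (fun s : ℝ => (1+s)^2) a := by fun_prop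
    exact ((this.inv₀ (by positivity)).neg).div_const 2
  have htend : Tendsto (fun s : ℝ => -((1+s)^2)⁻¹/2) atTop (𝓝 0) := by
    have h1 : Tendsto (fun s : ℝ => (1+s)^2) atTop atTop :=
      (tendsto_pow_atTop two_ne_zero).comp (tendsto_atTop_add_const_left _ 1 tendsto_id)
    have := (h1.inv_tendsto_atTop).neg.div_const 2
    simpa using this
  refine ⟨integrableOn_Ioi_deriv_of_nonneg hcont hderiv hpos htend, ?_⟩
  rw [integral_Ioi_of_hasDerivAt_of_nonneg hcont hderiv hpos htend]
  have : (0:ℝ) < 1 + a := by linarith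
  field_simp
  ring

lemma aux_count {s : ℝ} (hs : 0 < s) (hns : ¬∃ n : ℤ, (n : ℝ) = s) (c : ℝ) :
    ∑' n : ℤ, (if |(n : ℝ)| < s then c else 0) = (2 * (⌊s⌋ : ℝ) + 1) * c := by
  have hfl : (0:ℤ) ≤ ⌊s⌋ := Int.floor_nonneg.2 hs.le
  rw [tsum_eq_sum (s := Finset.Icc (-⌊s⌋) ⌊s⌋) ?_]
  · have hall : ∀ n ∈ Finset.Icc (-⌊s⌋) ⌊s⌋, (if |(n : ℝ)| < s then c else 0) = c := by
      intro n hn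
      rw [Finset.mem_Icc] at hn
      have habs : |n| ≤ ⌊s⌋ := abs_le.2 ⟨by linarith [hn.1], hn.2⟩
      have h1 : |(n:ℝ)| ≤ (⌊s⌋ : ℝ) := by
        rw [← Int.cast_abs]; exact_mod_cast habs
      have h2 : (⌊s⌋ : ℝ) ≤ s := Int.floor_le s
      have hne : |(n:ℝ)| ≠ s := by
        intro h; exact hns ⟨|n|, by rw [Int.cast_abs]; exact h⟩
      rw [if_pos (lt_of_le_of_ne (h1.trans h2) hne)]
    rw [Finset.sum_congr rfl hall, Finset.sum_const, Int.card_Icc]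
    have : ((⌊s⌋ + 1 - -⌊s⌋).toNat : ℝ) = 2 * (⌊s⌋:ℝ) + 1 := by
      rw [show ⌊s⌋ + 1 - -⌊s⌋ = 2 * ⌊s⌋ + 1 by ring,
        show (((2 * ⌊s⌋ + 1).toNat : ℕ) : ℝ) = (((2 * ⌊s⌋ + 1).toNat : ℤ) : ℝ) by push_cast; ring,
        Int.toNat_of_nonneg (by omega)]
      push_cast; ring
    rw [nsmul_eq_mul, this]
  · intro n hn
    rw [Finset.mem_Icc] at hn
    have : ⌊s⌋ < |n| := lt_of_not_ge fun h => hn (abs_le.mp h)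
    have h1 : s < |(n:ℝ)| := by
      have h2 : (⌊s⌋:ℝ) + 1 ≤ (|n|:ℤ) := by exact_mod_cast this
      have := Int.lt_floor_add_one s
      rw [← Int.cast_abs]
      linarith
    rw [if_neg (by push_neg; linarith)]

lemma aux_image {c : ℝ} (hc : 0 ≤ c) :
    (fun r : ℝ => Real.sqrt (r ^ 2 + c ^ 2)) '' Set.Ioi 0 = Set.Ioi c := by
  ext y
  constructor
  · rintro ⟨r, hr, rfl⟩
    have hr0 : (0:ℝ) < r := hr
    have : Real.sqrt (c ^ 2) < Real.sqrt (r ^ 2 + c ^ 2) := by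
      apply Real.sqrt_lt_sqrt (by positivity); nlinarith
    rwa [Real.sqrt_sq_eq_abs, abs_of_nonneg hc] at this
  · intro hy
    have hy' : c < y := hy
    have hy0 : 0 < y := lt_of_le_of_lt hc hy'
    have hpos : 0 < y ^ 2 - c ^ 2 := by nlinarith
    refine ⟨Real.sqrt (y ^ 2 - c ^ 2), Real.sqrt_pos.2 hpos, ?_⟩
    show Real.sqrt (Real.sqrt (y ^ 2 - c ^ 2) ^ 2 + c ^ 2) = y
    rw [Real.sq_sqrt hpos.le]
    rw [show y ^ 2 - c ^ 2 + c ^ 2 = y ^ 2 by ring, Real.sqrt_sq hy0.le]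

lemma aux_subst {c : ℝ} (hc : 0 ≤ c) (F : ℝ → ℝ) :
    ∫ s in Set.Ioi c, s * F s
      = ∫ r in Set.Ioi (0:ℝ), r * F (Real.sqrt (r ^ 2 + c ^ 2)) := by
  rw [← aux_image hc]
  rw [integral_image_eq_integral_abs_deriv_smul measurableSet_Ioi
    (f' := fun r => r / Real.sqrt (r ^ 2 + c ^ 2)) ?_ ?_ (fun s => s * F s)]
  · apply setIntegral_congr_fun measurableSet_Ioi
    intro r hr
    have hr0 : (0:ℝ) < r := hr
    have hu : (0:ℝ) < r ^ 2 + c ^ 2 := by positivity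
    have hsq : (0:ℝ) < Real.sqrt (r ^ 2 + c ^ 2) := Real.sqrt_pos.2 hu
    have : |r / Real.sqrt (r ^ 2 + c ^ 2)| = r / Real.sqrt (r ^ 2 + c ^ 2) :=
      abs_of_nonneg (by positivity)
    dsimp only
    rw [smul_eq_mul, this]
    field_simp
  · intro r hr
    have hr0 : (0:ℝ) < r := hr
    have hu : (0:ℝ) < r ^ 2 + c ^ 2 := by positivity
    have h1 : HasDerivAt (fun r : ℝ => r ^ 2 + c ^ 2) (2 * r) r := by
      simpa using (hasDerivAt_pow 2 r).add_const (c ^ 2)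
    have h2 := (Real.hasDerivAt_sqrt hu.ne').comp r h1
    apply HasDerivAt.hasDerivWithinAt
    refine h2.congr_deriv ?_
    have hsq : (0:ℝ) < Real.sqrt (r ^ 2 + c ^ 2) := Real.sqrt_pos.2 hu
    field_simp
  · intro a ha b hb hab
    have ha0 : (0:ℝ) < a := ha
    have hb0 : (0:ℝ) < b := hb
    have h2 : a ^ 2 + c ^ 2 = b ^ 2 + c ^ 2 := by
      have := congrArg (fun z : ℝ => z ^ 2) hab
      simpa [Real.sq_sqrt (by positivity : (0:ℝ) ≤ a ^ 2 + c ^ 2),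
        Real.sq_sqrt (by positivity : (0:ℝ) ≤ b ^ 2 + c ^ 2)] using this
    nlinarith

lemma aux_radial (G : ℝ → ℝ) :
    ∫ x : EuclideanSpace ℝ (Fin 2), G ‖x‖
      = 2 * Real.pi * ∫ y in Set.Ioi (0:ℝ), y * G y := by
  rw [MeasureTheory.integral_fun_norm_addHaar volume G]
  simp only [finrank_euclideanSpace_fin, measureReal_def, aux_ball, nsmul_eq_mul, smul_eq_mul, Nat.cast_ofNat,
    pow_one]
  norm_num [mul_assoc]

set_option maxHeartbeats 1000000 in
/-- Reduction of the regularized sum-integral over `ℝ² × ℤ` to a one-dimensional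
radial integral involving the corrected density of states `s² + s g(s)/π`. -/
theorem sum_integral_eq_radial_integral (f : ℝ → ℝ)
    (hf : ContinuousOn f (Set.Ici (0 : ℝ)))
    (hbd : ∃ M : ℝ, ∀ s : ℝ, 0 ≤ s → |f s| ≤ M)
    (φ : SchwartzMap ℝ ℝ) (γ lam η δ : ℝ) (hlam : 0 < lam) (hη : 0 < η)
    (hδ : δ ∈ Set.Icc 0 η) :
    (∑' n : ℤ, ∫ x : EuclideanSpace ℝ (Fin 2),
        f (Real.sqrt (‖x‖ ^ 2 + (n : ℝ) ^ 2 + δ ^ 2))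
            / Real.sqrt (‖x‖ ^ 2 + (n : ℝ) ^ 2 + δ ^ 2)
          * (‖x‖ ^ 2 + (n : ℝ) ^ 2 + η ^ 2) ^ (γ / 2)
          * φ (lam * Real.sqrt (‖x‖ ^ 2 + (n : ℝ) ^ 2 + η ^ 2)))
      = 4 * Real.pi * ∫ s in Set.Ioi (0 : ℝ),
          (s ^ 2 + s * g s / Real.pi)
            * (f (Real.sqrt (s ^ 2 + δ ^ 2)) / Real.sqrt (s ^ 2 + δ ^ 2))
            * (s ^ 2 + η ^ 2) ^ (γ / 2)
            * φ (lam * Real.sqrt (s ^ 2 + η ^ 2)) := by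
  obtain ⟨M, hM⟩ := hbd
  have hM0 : 0 ≤ M := (abs_nonneg _).trans (hM 0 le_rfl)
  obtain ⟨hδ0, hδη⟩ := hδ
  set F : ℝ → ℝ := fun s =>
    f (Real.sqrt (s ^ 2 + δ ^ 2)) / Real.sqrt (s ^ 2 + δ ^ 2)
      * (s ^ 2 + η ^ 2) ^ (γ / 2) * φ (lam * Real.sqrt (s ^ 2 + η ^ 2)) with hFdef
  set h : ℝ → ℝ := fun s => s * F s with hhdef
  -- measurability
  have hFmeas : Measurable F := by
    have hc1 : Continuous fun s : ℝ => f (Real.sqrt (s ^ 2 + δ ^ 2)) :=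
      hf.comp_continuous (by fun_prop) (fun s => Real.sqrt_nonneg _)
    have hc2 : Continuous fun s : ℝ => Real.sqrt (s ^ 2 + δ ^ 2) := by fun_prop
    have hc3 : Continuous fun s : ℝ => (s ^ 2 + η ^ 2) ^ (γ / 2) := by
      apply Continuous.rpow_const (by fun_prop)
      intro s
      exact Or.inl (by positivity)
    have hc4 : Continuous fun s : ℝ => (φ (lam * Real.sqrt (s ^ 2 + η ^ 2)) : ℝ) :=
      φ.continuous.comp (by fun_prop)
    exact (((hc1.measurable.div hc2.measurable).mul hc3.measurable).mul hc4.measurable)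
  have hhmeas : Measurable h := measurable_id.mul hFmeas
  -- the global bound
  obtain ⟨K, hK0, hKbd⟩ : ∃ K, 0 ≤ K ∧ ∀ s, 0 < s → |h s| ≤ K * ((1 + s) ^ 3)⁻¹ := by
    obtain ⟨C, hC0, hC⟩ := φ.decay (⌈γ⌉₊ + 3) 0
    set k : ℕ := ⌈γ⌉₊ with hk
    have hγk : γ ≤ (k : ℝ) := Nat.le_ceil γ
    set m : ℝ := min 1 η with hm
    have hm0 : 0 < m := lt_min one_pos hη
    have hconst0 : 0 ≤ M * C * η ^ (γ - (k:ℝ)) / lam ^ (k+3) :=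
      div_nonneg (mul_nonneg (mul_nonneg hM0 hC0.le) (Real.rpow_nonneg hη.le _))
        (pow_nonneg hlam.le _)
    refine ⟨M * C * η ^ (γ - (k:ℝ)) / lam ^ (k+3) * (8 / m ^ 3),
      mul_nonneg hconst0 (by positivity), ?_⟩
    intro s hs
    set t : ℝ := Real.sqrt (s ^ 2 + η ^ 2) with htdef
    have htpos : 0 < t := Real.sqrt_pos.2 (by positivity)
    have htη : η ≤ t := by
      rw [htdef]
      rw [show η ≤ Real.sqrt (s ^ 2 + η ^ 2) ↔ Real.sqrt (η ^ 2) ≤ Real.sqrt (s ^ 2 + η ^ 2) by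
        rw [Real.sqrt_sq hη.le]]
      exact Real.sqrt_le_sqrt (by nlinarith)
    have hts : s ≤ t := by
      rw [htdef]
      rw [show s ≤ Real.sqrt (s ^ 2 + η ^ 2) ↔ Real.sqrt (s ^ 2) ≤ Real.sqrt (s ^ 2 + η ^ 2) by
        rw [Real.sqrt_sq hs.le]]
      exact Real.sqrt_le_sqrt (by nlinarith)
    have hssq : (0:ℝ) < Real.sqrt (s ^ 2 + δ ^ 2) := Real.sqrt_pos.2 (by positivity)
    have hA : |h s| ≤ s / Real.sqrt (s ^ 2 + δ ^ 2) * M * (s ^ 2 + η ^ 2) ^ (γ / 2)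
        * |(φ (lam * t) : ℝ)| := by
      have e1 : |h s| = s / Real.sqrt (s ^ 2 + δ ^ 2) * |f (Real.sqrt (s ^ 2 + δ ^ 2))|
          * (s ^ 2 + η ^ 2) ^ (γ / 2) * |(φ (lam * t) : ℝ)| := by
        rw [hhdef, hFdef]
        dsimp only
        rw [abs_mul, abs_mul, abs_mul, abs_div, abs_of_pos hs,
          abs_of_nonneg (Real.sqrt_nonneg _),
          abs_of_nonneg (Real.rpow_nonneg (by positivity) _), htdef]
        ring
      rw [e1]
      have s1 : s / Real.sqrt (s ^ 2 + δ ^ 2) * |f (Real.sqrt (s ^ 2 + δ ^ 2))|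
          ≤ s / Real.sqrt (s ^ 2 + δ ^ 2) * M :=
        mul_le_mul_of_nonneg_left (hM _ (Real.sqrt_nonneg _))
          (div_nonneg hs.le (Real.sqrt_nonneg _))
      exact mul_le_mul_of_nonneg_right (mul_le_mul_of_nonneg_right s1
        (Real.rpow_nonneg (by positivity) _)) (abs_nonneg _)
    have hsdiv : s / Real.sqrt (s ^ 2 + δ ^ 2) ≤ 1 := by
      rw [div_le_one hssq]
      rw [show s ≤ Real.sqrt (s ^ 2 + δ ^ 2) ↔ Real.sqrt (s ^ 2) ≤ Real.sqrt (s ^ 2 + δ ^ 2) by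
        rw [Real.sqrt_sq hs.le]]
      exact Real.sqrt_le_sqrt (by nlinarith)
    have hB : (s ^ 2 + η ^ 2) ^ (γ / 2) = t ^ γ := by
      rw [htdef, Real.sqrt_eq_rpow, ← Real.rpow_mul (by positivity)]
      congr 1
      ring
    have htγ : t ^ γ ≤ η ^ (γ - (k:ℝ)) * t ^ k := by
      have h1 : t ^ γ = t ^ (γ - (k:ℝ)) * t ^ ((k:ℝ)) := by
        rw [← Real.rpow_add htpos]; ring_nf
      rw [h1, Real.rpow_natCast]
      have h2 : t ^ (γ - (k:ℝ)) ≤ η ^ (γ - (k:ℝ)) :=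
        Real.rpow_le_rpow_of_nonpos hη htη (by linarith)
      exact mul_le_mul_of_nonneg_right h2 (pow_nonneg htpos.le _)
    have hφ : |(φ (lam * t) : ℝ)| ≤ C / (lam * t) ^ (k + 3) := by
      have h1 := hC (lam * t)
      rw [norm_iteratedFDeriv_zero, Real.norm_eq_abs, Real.norm_eq_abs,
        abs_of_pos (by positivity : (0:ℝ) < lam * t)] at h1
      rw [le_div_iff₀ (by positivity : (0:ℝ) < (lam * t) ^ (k + 3))]
      linarith
    have hA2 : |h s| ≤ 1 * M * (η ^ (γ - (k:ℝ)) * t ^ k) * (C / (lam * t) ^ (k + 3)) := by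
      refine hA.trans ?_
      rw [hB]
      have s1 : s / Real.sqrt (s ^ 2 + δ ^ 2) * M ≤ 1 * M :=
        mul_le_mul_of_nonneg_right hsdiv hM0
      have s2 : s / Real.sqrt (s ^ 2 + δ ^ 2) * M * t ^ γ
          ≤ 1 * M * (η ^ (γ - (k:ℝ)) * t ^ k) :=
        mul_le_mul s1 htγ (Real.rpow_nonneg htpos.le _) (by simpa using hM0)
      exact mul_le_mul s2 hφ (abs_nonneg _)
        (mul_nonneg (by simpa using hM0)
          (mul_nonneg (Real.rpow_nonneg hη.le _) (pow_nonneg htpos.le _)))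
    have hA3 : 1 * M * (η ^ (γ - (k:ℝ)) * t ^ k) * (C / (lam * t) ^ (k + 3))
        = M * C * η ^ (γ - (k:ℝ)) / lam ^ (k+3) * (t ^ 3)⁻¹ := by
      rw [mul_pow]
      rw [show k + 3 = k + 3 from rfl, pow_add t k 3]
      field_simp
    have htm : m * (1 + s) / 2 ≤ t := by
      have h1 : m ≤ 1 := min_le_left _ _
      have h2 : m ≤ η := min_le_right _ _
      nlinarith
    have hinv : (t ^ 3)⁻¹ ≤ 8 / m ^ 3 * ((1 + s) ^ 3)⁻¹ := by
      have hml : (0:ℝ) < m * (1 + s) / 2 := by positivity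
      have h1 : (m * (1 + s) / 2) ^ 3 ≤ t ^ 3 := by
        apply pow_le_pow_left₀ hml.le htm
      have h2 : (t ^ 3)⁻¹ ≤ ((m * (1 + s) / 2) ^ 3)⁻¹ := by
        apply inv_anti₀ (by positivity) h1
      refine h2.trans (le_of_eq ?_)
      have hs1 : (0:ℝ) < 1 + s := by linarith
      field_simp
      ring
    calc |h s| ≤ M * C * η ^ (γ - (k:ℝ)) / lam ^ (k+3) * (t ^ 3)⁻¹ := by rw [← hA3]; exact hA2
      _ ≤ M * C * η ^ (γ - (k:ℝ)) / lam ^ (k+3) * (8 / m ^ 3 * ((1 + s) ^ 3)⁻¹) :=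
          mul_le_mul_of_nonneg_left hinv hconst0
      _ = M * C * η ^ (γ - (k:ℝ)) / lam ^ (k+3) * (8 / m ^ 3) * ((1 + s) ^ 3)⁻¹ := by ring
  -- per-term identity
  have key : ∀ n : ℤ, (∫ x : EuclideanSpace ℝ (Fin 2),
        f (Real.sqrt (‖x‖ ^ 2 + (n : ℝ) ^ 2 + δ ^ 2))
            / Real.sqrt (‖x‖ ^ 2 + (n : ℝ) ^ 2 + δ ^ 2)
          * (‖x‖ ^ 2 + (n : ℝ) ^ 2 + η ^ 2) ^ (γ / 2)
          * φ (lam * Real.sqrt (‖x‖ ^ 2 + (n : ℝ) ^ 2 + η ^ 2)))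
      = 2 * Real.pi * ∫ s in Set.Ioi (0:ℝ), (Set.Ioi |(n:ℝ)|).indicator h s := by
    intro n
    have habs : (0:ℝ) ≤ |(n:ℝ)| := abs_nonneg _
    have h1 : (∫ x : EuclideanSpace ℝ (Fin 2),
        f (Real.sqrt (‖x‖ ^ 2 + (n : ℝ) ^ 2 + δ ^ 2))
            / Real.sqrt (‖x‖ ^ 2 + (n : ℝ) ^ 2 + δ ^ 2)
          * (‖x‖ ^ 2 + (n : ℝ) ^ 2 + η ^ 2) ^ (γ / 2)
          * φ (lam * Real.sqrt (‖x‖ ^ 2 + (n : ℝ) ^ 2 + η ^ 2)))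
        = 2 * Real.pi * ∫ y in Set.Ioi (0:ℝ),
            y * F (Real.sqrt (y ^ 2 + |(n:ℝ)| ^ 2)) := by
      rw [aux_radial (fun y => f (Real.sqrt (y ^ 2 + (n : ℝ) ^ 2 + δ ^ 2))
            / Real.sqrt (y ^ 2 + (n : ℝ) ^ 2 + δ ^ 2)
          * (y ^ 2 + (n : ℝ) ^ 2 + η ^ 2) ^ (γ / 2)
          * φ (lam * Real.sqrt (y ^ 2 + (n : ℝ) ^ 2 + η ^ 2)))]
      congr 1
      apply setIntegral_congr_fun measurableSet_Ioi
      intro y hy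
      have hy0 : (0:ℝ) < y := hy
      have hsum : (0:ℝ) ≤ y ^ 2 + (n:ℝ) ^ 2 := by positivity
      dsimp only
      rw [hFdef]
      dsimp only
      rw [sq_abs, Real.sq_sqrt hsum]
    rw [h1, ← aux_subst habs F]
    congr 1
    rw [setIntegral_indicator measurableSet_Ioi, Set.Ioi_inter_Ioi, max_eq_right habs]
  -- rewrite the series
  calc (∑' n : ℤ, ∫ x : EuclideanSpace ℝ (Fin 2),
        f (Real.sqrt (‖x‖ ^ 2 + (n : ℝ) ^ 2 + δ ^ 2))
            / Real.sqrt (‖x‖ ^ 2 + (n : ℝ) ^ 2 + δ ^ 2)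
          * (‖x‖ ^ 2 + (n : ℝ) ^ 2 + η ^ 2) ^ (γ / 2)
          * φ (lam * Real.sqrt (‖x‖ ^ 2 + (n : ℝ) ^ 2 + η ^ 2)))
      = 2 * Real.pi * ∑' n : ℤ, ∫ s in Set.Ioi (0:ℝ), (Set.Ioi |(n:ℝ)|).indicator h s := by
        rw [← tsum_mul_left]
        exact tsum_congr key
    _ = 2 * Real.pi * ∫ s in Set.Ioi (0:ℝ), ∑' n : ℤ, (Set.Ioi |(n:ℝ)|).indicator h s := by
        congr 1
        rw [MeasureTheory.integral_tsum]
        · intro n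
          exact ((hhmeas.indicator measurableSet_Ioi).aestronglyMeasurable)
        · have hbnd : ∀ n : ℤ,
              (∫⁻ s, ‖(Set.Ioi |(n:ℝ)|).indicator h s‖₊ ∂(volume.restrict (Set.Ioi 0)))
                ≤ ENNReal.ofReal (K * ((2:ℝ) * (1 + |(n:ℝ)|) ^ 2)⁻¹) := by
            intro n
            have habs : (0:ℝ) ≤ |(n:ℝ)| := abs_nonneg _
            obtain ⟨hint, hval⟩ := aux_intbound habs
            calc ∫⁻ s, ‖(Set.Ioi |(n:ℝ)|).indicator h s‖₊ ∂(volume.restrict (Set.Ioi 0))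
                ≤ ∫⁻ s, (Set.Ioi |(n:ℝ)|).indicator
                    (fun s => ENNReal.ofReal (K * ((1 + s) ^ 3)⁻¹)) s
                    ∂(volume.restrict (Set.Ioi 0)) := by
                  apply lintegral_mono_ae
                  filter_upwards [ae_restrict_mem measurableSet_Ioi] with s hs
                  have hs0 : (0:ℝ) < s := hs
                  by_cases hmem : s ∈ Set.Ioi |(n:ℝ)|
                  · rw [Set.indicator_of_mem hmem, Set.indicator_of_mem hmem,
                      ← enorm_eq_nnnorm, ← ofReal_norm_eq_enorm, Real.norm_eq_abs]
                    exact ENNReal.ofReal_le_ofReal (hKbd s hs0)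
                  · rw [Set.indicator_of_notMem hmem, Set.indicator_of_notMem hmem]
                    simp
              _ = ∫⁻ s in Set.Ioi |(n:ℝ)|, ENNReal.ofReal (K * ((1 + s) ^ 3)⁻¹) := by
                  rw [lintegral_indicator measurableSet_Ioi,
                    Measure.restrict_restrict measurableSet_Ioi, Set.Ioi_inter_Ioi,
                    max_eq_left habs]
              _ = ENNReal.ofReal (∫ s in Set.Ioi |(n:ℝ)|, K * ((1 + s) ^ 3)⁻¹) := by
                  rw [← ofReal_integral_eq_lintegral_ofReal (hint.const_mul K)]
                  filter_upwards [ae_restrict_mem measurableSet_Ioi] with s hs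
                  have hs0 : (0:ℝ) < s := lt_of_le_of_lt habs hs
                  have h1 : (0:ℝ) < 1 + s := by linarith
                  positivity
              _ = ENNReal.ofReal (K * ((2:ℝ) * (1 + |(n:ℝ)|) ^ 2)⁻¹) := by
                  rw [MeasureTheory.integral_const_mul, hval]
          have hsumm : Summable (fun n : ℤ => K * ((2:ℝ) * (1 + |(n:ℝ)|) ^ 2)⁻¹) := by
            apply Summable.mul_left
            have hbase : Summable (fun n : ℕ => ((2:ℝ) * (1 + (n:ℝ)) ^ 2)⁻¹) := by
              have h1 : Summable (fun n : ℕ => 1 / ((n + 1 : ℕ):ℝ) ^ 2) :=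
                (summable_nat_add_iff 1).2 (Real.summable_one_div_nat_pow.2 one_lt_two)
              apply Summable.of_nonneg_of_le (fun n => by positivity) _ h1
              intro n
              rw [one_div]
              apply inv_anti₀ (by positivity)
              push_cast
              nlinarith [sq_nonneg (1 + (n:ℝ))]
            apply Summable.of_nat_of_neg
            · apply hbase.congr
              intro n
              norm_num [abs_of_nonneg (Nat.cast_nonneg (α := ℝ) n)]
            · apply hbase.congr
              intro n
              push_cast
              rw [abs_neg, abs_of_nonneg (Nat.cast_nonneg (α := ℝ) n)]
          refine ne_of_lt (lt_of_le_of_lt (ENNReal.tsum_le_tsum hbnd) ?_)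
          rw [← ENNReal.ofReal_tsum_of_nonneg (fun n => by positivity) hsumm]
          exact ENNReal.ofReal_lt_top
    _ = 4 * Real.pi * ∫ s in Set.Ioi (0 : ℝ),
          (s ^ 2 + s * g s / Real.pi)
            * (f (Real.sqrt (s ^ 2 + δ ^ 2)) / Real.sqrt (s ^ 2 + δ ^ 2))
            * (s ^ 2 + η ^ 2) ^ (γ / 2)
            * φ (lam * Real.sqrt (s ^ 2 + η ^ 2)) := by
        have hnull : volume {s : ℝ | ∃ n : ℤ, (n:ℝ) = s} = 0 := by
          have he : {s : ℝ | ∃ n : ℤ, (n:ℝ) = s} = Set.range (fun n : ℤ => (n:ℝ)) := rfl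
          rw [he]
          exact (Set.countable_range _).measure_zero _
        have h0 : ∀ᵐ s ∂(volume.restrict (Set.Ioi (0:ℝ))), ¬∃ n : ℤ, (n:ℝ) = s := by
          refine ae_restrict_of_ae ?_
          rw [ae_iff]
          simpa [not_not] using hnull
        have hae : (fun s => ∑' n : ℤ, (Set.Ioi |(n:ℝ)|).indicator h s)
            =ᵐ[volume.restrict (Set.Ioi (0:ℝ))]
            (fun s => 2 * ((s ^ 2 + s * g s / Real.pi) * F s)) := by
          filter_upwards [ae_restrict_mem measurableSet_Ioi, h0] with s hs hns
          have hs0 : (0:ℝ) < s := hs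
          have e1 : ∀ n : ℤ, (Set.Ioi |(n:ℝ)|).indicator h s
              = if |(n:ℝ)| < s then h s else 0 := fun n => by
            simp [Set.indicator_apply, Set.mem_Ioi]
          rw [tsum_congr e1, aux_count hs0 hns (h s)]
          rw [hhdef]
          simp only [g, if_neg hns]
          rw [mul_comm Real.pi, mul_div_assoc, mul_div_assoc, div_self Real.pi_ne_zero,
            mul_one, Int.fract]
          ring
        rw [integral_congr_ae hae, MeasureTheory.integral_const_mul]
        have e2 : ∫ s in Set.Ioi (0:ℝ), (s ^ 2 + s * g s / Real.pi) * F s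
            = ∫ s in Set.Ioi (0:ℝ),
              (s ^ 2 + s * g s / Real.pi)
                * (f (Real.sqrt (s ^ 2 + δ ^ 2)) / Real.sqrt (s ^ 2 + δ ^ 2))
                * (s ^ 2 + η ^ 2) ^ (γ / 2)
                * φ (lam * Real.sqrt (s ^ 2 + η ^ 2)) := by
          apply integral_congr_ae
          filter_upwards with s
          rw [hFdef]
          ring
        rw [e2]
        ring
end

section
/- Let \varphi : \mathbb{R} \to \mathbb{R} be a Schwartz function with \varphi(0) = 1. Then \lim_{\lambda \to 0^+} \int_0^{\infty} s^2\, g(s)\, \varphi(\lambda s)\, ds = -\frac{\pi}{360}. (Equivalently, the regularized Casimir energy between two perfectly conducting plates of area L^2 at separation d, E^{\varphi}_{\mathrm{Casimir}}(L, d) = \frac{\pi}{2}\frac{L^2}{d^3} \int_0^{\infty} s^2 g(s) \varphi(\lambda s)\, ds with \lambda = \kappa_d/\kappa_\varphi, tends to -\frac{\pi^2}{720}\frac{L^2}{d^3} as the cut-off ratio \lambda tends to 0.) -/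
open Filter Topology Real MeasureTheory Classical

noncomputable section CasimirAux

/-- periodized Bernoulli B₁ -/
def B1 (s : ℝ) : ℝ := Int.fract s - 1/2
/-- periodized B₂/2 -/
def P2 (s : ℝ) : ℝ := (Int.fract s ^ 2 - Int.fract s + 1/6) / 2
def P3 (s : ℝ) : ℝ := (Int.fract s ^ 3 - 3/2 * Int.fract s ^ 2 + 1/2 * Int.fract s) / 6
def P4 (s : ℝ) : ℝ := (Int.fract s ^ 4 - 2 * Int.fract s ^ 3 + Int.fract s ^ 2 - 1/30) / 24
def P5 (s : ℝ) : ℝ := (Int.fract s ^ 5 - 5/2 * Int.fract s ^ 4 + 5/3 * Int.fract s ^ 3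
    - 1/6 * Int.fract s) / 120

lemma hasDerivWithinAt_fract (x : ℝ) : HasDerivWithinAt Int.fract 1 (Set.Ici x) x := by
  have h1 : HasDerivWithinAt (fun s : ℝ => s - (⌊x⌋ : ℝ)) 1 (Set.Ici x) x :=
    ((hasDerivAt_id x).sub_const _).hasDerivWithinAt
  refine HasDerivWithinAt.congr_of_eventuallyEq h1 ?_ ?_
  · have hmem : Set.Iio ((⌊x⌋ : ℝ) + 1) ∈ 𝓝[Set.Ici x] x :=
      nhdsWithin_le_nhds (Iio_mem_nhds (Int.lt_floor_add_one x))
    filter_upwards [hmem, self_mem_nhdsWithin] with s hs1 hs2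
    have : ⌊s⌋ = ⌊x⌋ := Int.floor_eq_iff.mpr ⟨le_trans (Int.floor_le x) hs2, hs1⟩
    rw [Int.fract, this]
  · rfl

lemma fract_poly_hasDerivWithinAt {q : ℝ → ℝ} {d : ℝ} (x : ℝ)
    (hq : HasDerivAt q d (Int.fract x)) :
    HasDerivWithinAt (fun s => q (Int.fract s)) d (Set.Ici x) x := by
  have h := HasDerivAt.comp_hasDerivWithinAt x hq (hasDerivWithinAt_fract x)
  rw [mul_one] at h
  exact h

lemma hasDerivWithinAt_P2 (x : ℝ) : HasDerivWithinAt P2 (B1 x) (Set.Ici x) x := by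
  unfold P2
  refine fract_poly_hasDerivWithinAt (q := fun y => (y ^ 2 - y + 1/6) / 2) x ?_
  have h := (((hasDerivAt_pow 2 (Int.fract x)).sub (hasDerivAt_id (Int.fract x))).add_const (1/6 : ℝ)).div_const 2
  refine h.congr_deriv ?_
  simp only [B1]; push_cast; ring
lemma hasDerivWithinAt_P3 (x : ℝ) : HasDerivWithinAt P3 (P2 x) (Set.Ici x) x := by
  unfold P3
  refine fract_poly_hasDerivWithinAt (q := fun y => (y ^ 3 - 3/2 * y ^ 2 + 1/2 * y) / 6) x ?_
  have h := (((hasDerivAt_pow 3 (Int.fract x)).sub (HasDerivAt.const_mul (3/2 : ℝ) (hasDerivAt_pow 2 (Int.fract x)))).add (HasDerivAt.const_mul (1/2 : ℝ) (hasDerivAt_id (Int.fract x)))).div_const 6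
  refine h.congr_deriv ?_
  simp only [P2]; push_cast; ring
lemma hasDerivWithinAt_P4 (x : ℝ) : HasDerivWithinAt P4 (P3 x) (Set.Ici x) x := by
  unfold P4
  refine fract_poly_hasDerivWithinAt (q := fun y => (y ^ 4 - 2 * y ^ 3 + y ^ 2 - 1/30) / 24) x ?_
  have h := ((((hasDerivAt_pow 4 (Int.fract x)).sub (HasDerivAt.const_mul (2 : ℝ) (hasDerivAt_pow 3 (Int.fract x)))).add (hasDerivAt_pow 2 (Int.fract x))).sub_const (1/30 : ℝ)).div_const 24
  refine h.congr_deriv ?_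
  simp only [P3]; push_cast; ring
lemma hasDerivWithinAt_P5 (x : ℝ) : HasDerivWithinAt P5 (P4 x) (Set.Ici x) x := by
  unfold P5
  refine fract_poly_hasDerivWithinAt (q := fun y => (y ^ 5 - 5/2 * y ^ 4 + 5/3 * y ^ 3 - 1/6 * y) / 120) x ?_
  have h := ((((hasDerivAt_pow 5 (Int.fract x)).sub (HasDerivAt.const_mul (5/2 : ℝ) (hasDerivAt_pow 4 (Int.fract x)))).add (HasDerivAt.const_mul (5/3 : ℝ) (hasDerivAt_pow 3 (Int.fract x)))).sub (HasDerivAt.const_mul (1/6 : ℝ) (hasDerivAt_id (Int.fract x)))).div_const 120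
  refine h.congr_deriv ?_
  simp only [P4]; push_cast; ring

lemma continuous_P2 : Continuous P2 := by
  have h : ContinuousOn (fun y : ℝ => (y ^ 2 - y + 1/6) / 2) (Set.Icc 0 1) := by fun_prop
  have := h.comp_fract'' (by norm_num)
  exact this

lemma continuous_P3 : Continuous P3 := by
  have h : ContinuousOn (fun y : ℝ => (y ^ 3 - 3/2 * y ^ 2 + 1/2 * y) / 6) (Set.Icc 0 1) := by
    fun_prop
  exact h.comp_fract'' (by norm_num)

lemma continuous_P4 : Continuous P4 := by
  have h : ContinuousOn (fun y : ℝ => (y ^ 4 - 2 * y ^ 3 + y ^ 2 - 1/30) / 24)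
      (Set.Icc 0 1) := by fun_prop
  exact h.comp_fract'' (by norm_num)

lemma continuous_P5 : Continuous P5 := by
  have h : ContinuousOn (fun y : ℝ => (y ^ 5 - 5/2 * y ^ 4 + 5/3 * y ^ 3 - 1/6 * y) / 120)
      (Set.Icc 0 1) := by fun_prop
  exact h.comp_fract'' (by norm_num)

lemma fract_pow_mem (s : ℝ) (n : ℕ) : 0 ≤ Int.fract s ^ n ∧ Int.fract s ^ n ≤ 1 :=
  ⟨pow_nonneg (Int.fract_nonneg s) n, pow_le_one₀ (Int.fract_nonneg s) (Int.fract_lt_one s).le⟩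

lemma abs_B1_le (s : ℝ) : |B1 s| ≤ 1 := by
  have h1 := Int.fract_nonneg s
  have h2 := (Int.fract_lt_one s).le
  rw [abs_le]; constructor <;> simp [B1] <;> nlinarith

lemma abs_P2_le (s : ℝ) : |P2 s| ≤ 1 := by
  obtain ⟨a1, b1⟩ := fract_pow_mem s 1
  obtain ⟨a2, b2⟩ := fract_pow_mem s 2
  rw [abs_le]; constructor <;> · simp only [P2]; rw [pow_one] at a1 b1; linarith

lemma abs_P3_le (s : ℝ) : |P3 s| ≤ 1 := by
  obtain ⟨a1, b1⟩ := fract_pow_mem s 1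
  obtain ⟨a2, b2⟩ := fract_pow_mem s 2
  obtain ⟨a3, b3⟩ := fract_pow_mem s 3
  rw [abs_le]; constructor <;> · simp only [P3]; rw [pow_one] at a1 b1; linarith

lemma abs_P4_le (s : ℝ) : |P4 s| ≤ 1 := by
  obtain ⟨a2, b2⟩ := fract_pow_mem s 2
  obtain ⟨a3, b3⟩ := fract_pow_mem s 3
  obtain ⟨a4, b4⟩ := fract_pow_mem s 4
  rw [abs_le]; constructor <;> · simp only [P4]; linarith

lemma abs_P5_le (s : ℝ) : |P5 s| ≤ 1 := by
  obtain ⟨a1, b1⟩ := fract_pow_mem s 1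
  obtain ⟨a3, b3⟩ := fract_pow_mem s 3
  obtain ⟨a4, b4⟩ := fract_pow_mem s 4
  obtain ⟨a5, b5⟩ := fract_pow_mem s 5
  rw [abs_le]; constructor <;> · simp only [P5]; rw [pow_one] at a1 b1; linarith


open SchwartzMap in
def d1 (φ : SchwartzMap ℝ ℝ) : SchwartzMap ℝ ℝ := SchwartzMap.derivCLM ℝ ℝ φ

lemma schwartz_hasDerivAt (ψ : SchwartzMap ℝ ℝ) (x : ℝ) :
    HasDerivAt ψ (d1 ψ x) x := by
  have h : DifferentiableAt ℝ ψ x := ((ψ.smooth 1).differentiable (by norm_num)).differentiableAt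
  have e : d1 ψ x = deriv ψ x := SchwartzMap.derivCLM_apply (𝕜 := ℝ) ψ x
  rw [e]
  exact h.hasDerivAt

lemma hasDerivAt_scale (ψ : SchwartzMap ℝ ℝ) (lam s : ℝ) :
    HasDerivAt (fun t => ψ (lam * t)) (lam * d1 ψ (lam * s)) s := by
  have h := (schwartz_hasDerivAt ψ (lam * s)).comp s ((hasDerivAt_id s).const_mul lam)
  refine h.congr_deriv ?_
  ring

def F0 (φ : SchwartzMap ℝ ℝ) (lam s : ℝ) : ℝ := s ^ 2 * φ (lam * s)
def F1 (φ : SchwartzMap ℝ ℝ) (lam s : ℝ) : ℝ :=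
  2 * s * φ (lam * s) + lam * s ^ 2 * d1 φ (lam * s)
def F2 (φ : SchwartzMap ℝ ℝ) (lam s : ℝ) : ℝ :=
  2 * φ (lam * s) + 4 * lam * s * d1 φ (lam * s) + lam ^ 2 * s ^ 2 * d1 (d1 φ) (lam * s)
def F3 (φ : SchwartzMap ℝ ℝ) (lam s : ℝ) : ℝ :=
  6 * lam * d1 φ (lam * s) + 6 * lam ^ 2 * s * d1 (d1 φ) (lam * s)
    + lam ^ 3 * s ^ 2 * d1 (d1 (d1 φ)) (lam * s)
def F4 (φ : SchwartzMap ℝ ℝ) (lam s : ℝ) : ℝ :=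
  12 * lam ^ 2 * d1 (d1 φ) (lam * s) + 8 * lam ^ 3 * s * d1 (d1 (d1 φ)) (lam * s)
    + lam ^ 4 * s ^ 2 * d1 (d1 (d1 (d1 φ))) (lam * s)

lemma hasDerivAt_F0 (φ : SchwartzMap ℝ ℝ) (lam s : ℝ) :
    HasDerivAt (F0 φ lam) (F1 φ lam s) s := by
  unfold F0 F1
  have h := (hasDerivAt_pow 2 s).mul (hasDerivAt_scale φ lam s)
  refine h.congr_deriv ?_
  try simp only [id_eq]
  push_cast
  ring

lemma hasDerivAt_F1 (φ : SchwartzMap ℝ ℝ) (lam s : ℝ) :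
    HasDerivAt (F1 φ lam) (F2 φ lam s) s := by
  unfold F1 F2
  have h := ((HasDerivAt.const_mul (2:ℝ) (hasDerivAt_id s)).mul (hasDerivAt_scale φ lam s)).add
    ((HasDerivAt.const_mul lam (hasDerivAt_pow 2 s)).mul (hasDerivAt_scale (d1 φ) lam s))
  refine h.congr_deriv ?_
  try simp only [id_eq]
  push_cast
  ring

lemma hasDerivAt_F2 (φ : SchwartzMap ℝ ℝ) (lam s : ℝ) :
    HasDerivAt (F2 φ lam) (F3 φ lam s) s := by
  unfold F2 F3
  have h := ((HasDerivAt.const_mul (2:ℝ) (hasDerivAt_scale φ lam s)).add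
    ((HasDerivAt.const_mul (4 * lam) (hasDerivAt_id s)).mul (hasDerivAt_scale (d1 φ) lam s))).add
    ((HasDerivAt.const_mul (lam ^ 2) (hasDerivAt_pow 2 s)).mul
      (hasDerivAt_scale (d1 (d1 φ)) lam s))
  refine h.congr_deriv ?_
  try simp only [id_eq]
  push_cast
  ring

lemma hasDerivAt_F3 (φ : SchwartzMap ℝ ℝ) (lam s : ℝ) :
    HasDerivAt (F3 φ lam) (F4 φ lam s) s := by
  unfold F3 F4
  have h := ((HasDerivAt.const_mul (6 * lam) (hasDerivAt_scale (d1 φ) lam s)).add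
    ((HasDerivAt.const_mul (6 * lam ^ 2) (hasDerivAt_id s)).mul
      (hasDerivAt_scale (d1 (d1 φ)) lam s))).add
    ((HasDerivAt.const_mul (lam ^ 3) (hasDerivAt_pow 2 s)).mul
      (hasDerivAt_scale (d1 (d1 (d1 φ))) lam s))
  refine h.congr_deriv ?_
  try simp only [id_eq]
  push_cast
  ring

def Afun (φ : SchwartzMap ℝ ℝ) (lam s : ℝ) : ℝ :=
  P2 s * F0 φ lam s - P3 s * F1 φ lam s + P4 s * F2 φ lam s - P5 s * F3 φ lam s

lemma hasDerivWithinAt_A (φ : SchwartzMap ℝ ℝ) (lam x : ℝ) :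
    HasDerivWithinAt (Afun φ lam) (B1 x * F0 φ lam x - P5 x * F4 φ lam x) (Set.Ici x) x := by
  unfold Afun
  have h := ((((hasDerivWithinAt_P2 x).mul (hasDerivAt_F0 φ lam x).hasDerivWithinAt).sub
    ((hasDerivWithinAt_P3 x).mul (hasDerivAt_F1 φ lam x).hasDerivWithinAt)).add
    ((hasDerivWithinAt_P4 x).mul (hasDerivAt_F2 φ lam x).hasDerivWithinAt)).sub
    ((hasDerivWithinAt_P5 x).mul (hasDerivAt_F3 φ lam x).hasDerivWithinAt)
  refine h.congr_deriv ?_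
  ring

lemma continuous_scale (ψ : SchwartzMap ℝ ℝ) (lam : ℝ) :
    Continuous fun s : ℝ => ψ (lam * s) :=
  ψ.continuous.comp (continuous_const.mul continuous_id)

lemma continuous_F0 (φ : SchwartzMap ℝ ℝ) (lam : ℝ) : Continuous (F0 φ lam) :=
  (continuous_pow 2).mul (continuous_scale φ lam)

lemma continuous_F1 (φ : SchwartzMap ℝ ℝ) (lam : ℝ) : Continuous (F1 φ lam) :=
  ((continuous_const.mul continuous_id).mul (continuous_scale φ lam)).add
    ((continuous_const.mul (continuous_pow 2)).mul (continuous_scale (d1 φ) lam))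

lemma continuous_F2 (φ : SchwartzMap ℝ ℝ) (lam : ℝ) : Continuous (F2 φ lam) :=
  ((continuous_const.mul (continuous_scale φ lam)).add
    ((continuous_const.mul continuous_id).mul (continuous_scale (d1 φ) lam))).add
    ((continuous_const.mul (continuous_pow 2)).mul (continuous_scale (d1 (d1 φ)) lam))

lemma continuous_F3 (φ : SchwartzMap ℝ ℝ) (lam : ℝ) : Continuous (F3 φ lam) :=
  ((continuous_const.mul (continuous_scale (d1 φ) lam)).add
    ((continuous_const.mul continuous_id).mul (continuous_scale (d1 (d1 φ)) lam))).add
    ((continuous_const.mul (continuous_pow 2)).mul (continuous_scale (d1 (d1 (d1 φ))) lam))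

lemma continuous_A (φ : SchwartzMap ℝ ℝ) (lam : ℝ) : Continuous (Afun φ lam) :=
  (((continuous_P2.mul (continuous_F0 φ lam)).sub
    (continuous_P3.mul (continuous_F1 φ lam))).add
    (continuous_P4.mul (continuous_F2 φ lam))).sub
    (continuous_P5.mul (continuous_F3 φ lam))


lemma integrable_base (ψ : SchwartzMap ℝ ℝ) (a : ℕ) {lam : ℝ} (hlam : 0 < lam) :
    Integrable (fun s : ℝ => s ^ a * ψ (lam * s)) := by
  have h1 : Integrable (fun x : ℝ => x ^ a * ψ x) := by
    refine (ψ.integrable_pow_mul volume a).mono'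
      ((continuous_pow a).mul ψ.continuous).aestronglyMeasurable
      (Eventually.of_forall fun x => ?_)
    exact le_of_eq (by simp [norm_mul, norm_pow])
  have h2 := h1.comp_mul_left' (ne_of_gt hlam)
  have h3 := h2.const_mul ((lam ^ a)⁻¹)
  have heq : (fun s : ℝ => s ^ a * ψ (lam * s))
      = fun s => (lam ^ a)⁻¹ * ((lam * s) ^ a * ψ (lam * s)) := by
    funext s
    have hl : (lam : ℝ) ^ a ≠ 0 := pow_ne_zero _ hlam.ne'
    rw [mul_pow]
    field_simp
  rw [heq]
  exact h3

lemma tendsto_base (ψ : SchwartzMap ℝ ℝ) (a : ℕ) {lam : ℝ} (hlam : 0 < lam) :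
    Tendsto (fun s : ℝ => s ^ a * ψ (lam * s)) atTop (𝓝 0) := by
  obtain ⟨C, hCpos, hC⟩ := ψ.decay (a + 1) 0
  have hbound : ∀ᶠ s in atTop, ‖s ^ a * ψ (lam * s)‖ ≤ C / lam ^ (a + 1) / s := by
    filter_upwards [eventually_ge_atTop 1] with s hs
    have hs0 : (0 : ℝ) < s := lt_of_lt_of_le one_pos hs
    have h1 := hC (lam * s)
    rw [norm_iteratedFDeriv_zero] at h1
    have hls : 0 < lam * s := mul_pos hlam hs0
    rw [Real.norm_eq_abs, Real.norm_eq_abs, abs_of_pos hls] at h1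
    have h2 : |ψ (lam * s)| ≤ C / (lam * s) ^ (a + 1) := by
      rw [le_div_iff₀ (pow_pos hls _)]
      linarith [h1]
    calc ‖s ^ a * ψ (lam * s)‖ = s ^ a * |ψ (lam * s)| := by
          rw [Real.norm_eq_abs, abs_mul, abs_pow, abs_of_pos hs0]
      _ ≤ s ^ a * (C / (lam * s) ^ (a + 1)) :=
          mul_le_mul_of_nonneg_left h2 (pow_nonneg hs0.le _)
      _ = C / lam ^ (a + 1) / s := by
          rw [mul_pow, pow_succ]
          field_simp
          ring
  have hlim : Tendsto (fun s : ℝ => C / lam ^ (a + 1) / s) atTop (𝓝 0) :=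
    tendsto_const_nhds.div_atTop tendsto_id
  exact squeeze_zero_norm' hbound hlim

lemma tendsto_bdd_mul {P F : ℝ → ℝ} (hP : ∀ s, |P s| ≤ 1)
    (hF : Tendsto F atTop (𝓝 0)) : Tendsto (fun s => P s * F s) atTop (𝓝 0) := by
  refine squeeze_zero_norm' (a := fun s => |F s|) (Eventually.of_forall fun s => ?_) ?_
  · show ‖P s * F s‖ ≤ |F s|
    rw [Real.norm_eq_abs, abs_mul]
    calc |P s| * |F s| ≤ 1 * |F s| := mul_le_mul_of_nonneg_right (hP s) (abs_nonneg _)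
      _ = |F s| := one_mul _
  · have := hF.abs
    simpa using this

lemma tendsto_F0 (φ : SchwartzMap ℝ ℝ) {lam : ℝ} (hlam : 0 < lam) :
    Tendsto (F0 φ lam) atTop (𝓝 0) := by
  have := tendsto_base φ 2 hlam
  exact this

lemma tendsto_F1 (φ : SchwartzMap ℝ ℝ) {lam : ℝ} (hlam : 0 < lam) :
    Tendsto (F1 φ lam) atTop (𝓝 0) := by
  have h := ((tendsto_base φ 1 hlam).const_mul (2 : ℝ)).add
    ((tendsto_base (d1 φ) 2 hlam).const_mul lam)
  have heq : F1 φ lam = fun s => 2 * (s ^ 1 * φ (lam * s)) + lam * (s ^ 2 * d1 φ (lam * s)) := by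
    funext s; unfold F1; ring
  rw [heq]
  simpa using h

lemma tendsto_F2 (φ : SchwartzMap ℝ ℝ) {lam : ℝ} (hlam : 0 < lam) :
    Tendsto (F2 φ lam) atTop (𝓝 0) := by
  have h := (((tendsto_base φ 0 hlam).const_mul (2 : ℝ)).add
    ((tendsto_base (d1 φ) 1 hlam).const_mul (4 * lam))).add
    ((tendsto_base (d1 (d1 φ)) 2 hlam).const_mul (lam ^ 2))
  have heq : F2 φ lam = fun s => (2 * (s ^ 0 * φ (lam * s))
      + 4 * lam * (s ^ 1 * d1 φ (lam * s))) + lam ^ 2 * (s ^ 2 * d1 (d1 φ) (lam * s)) := by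
    funext s; unfold F2; ring
  rw [heq]
  simpa using h

lemma tendsto_F3 (φ : SchwartzMap ℝ ℝ) {lam : ℝ} (hlam : 0 < lam) :
    Tendsto (F3 φ lam) atTop (𝓝 0) := by
  have h := (((tendsto_base (d1 φ) 0 hlam).const_mul (6 * lam)).add
    ((tendsto_base (d1 (d1 φ)) 1 hlam).const_mul (6 * lam ^ 2))).add
    ((tendsto_base (d1 (d1 (d1 φ))) 2 hlam).const_mul (lam ^ 3))
  have heq : F3 φ lam = fun s => (6 * lam * (s ^ 0 * d1 φ (lam * s))
      + 6 * lam ^ 2 * (s ^ 1 * d1 (d1 φ) (lam * s)))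
      + lam ^ 3 * (s ^ 2 * d1 (d1 (d1 φ)) (lam * s)) := by
    funext s; unfold F3; ring
  rw [heq]
  simpa using h

lemma tendsto_A_atTop (φ : SchwartzMap ℝ ℝ) {lam : ℝ} (hlam : 0 < lam) :
    Tendsto (Afun φ lam) atTop (𝓝 0) := by
  have h := (((tendsto_bdd_mul abs_P2_le (tendsto_F0 φ hlam)).sub
    (tendsto_bdd_mul abs_P3_le (tendsto_F1 φ hlam))).add
    (tendsto_bdd_mul abs_P4_le (tendsto_F2 φ hlam))).sub
    (tendsto_bdd_mul abs_P5_le (tendsto_F3 φ hlam))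
  have heq : Afun φ lam = fun s => (P2 s * F0 φ lam s - P3 s * F1 φ lam s
      + P4 s * F2 φ lam s) - P5 s * F3 φ lam s := by
    funext s; unfold Afun; ring
  rw [heq]
  simpa using h

lemma integrableOn_F4_mul (φ : SchwartzMap ℝ ℝ) {lam : ℝ} (hlam : 0 < lam) :
    Integrable (F4 φ lam) := by
  have h := (((integrable_base (d1 (d1 φ)) 0 hlam).const_mul (12 * lam ^ 2)).add
    ((integrable_base (d1 (d1 (d1 φ))) 1 hlam).const_mul (8 * lam ^ 3))).add
    ((integrable_base (d1 (d1 (d1 (d1 φ)))) 2 hlam).const_mul (lam ^ 4))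
  have heq : F4 φ lam = fun s => (12 * lam ^ 2 * (s ^ 0 * d1 (d1 φ) (lam * s))
      + 8 * lam ^ 3 * (s ^ 1 * d1 (d1 (d1 φ)) (lam * s)))
      + lam ^ 4 * (s ^ 2 * d1 (d1 (d1 (d1 φ))) (lam * s)) := by
    funext s; unfold F4; ring
  rw [heq]
  exact h

lemma integrableOn_B1F0 (φ : SchwartzMap ℝ ℝ) {lam : ℝ} (hlam : 0 < lam) :
    IntegrableOn (fun s => B1 s * F0 φ lam s) (Set.Ioi 0) := by
  refine Integrable.bdd_mul (integrable_base φ 2 hlam).integrableOn ?_ (c := 1) (Eventually.of_forall fun x => ?_)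
  · exact ((measurable_fract.sub measurable_const).aestronglyMeasurable)
  · rw [Real.norm_eq_abs]; exact abs_B1_le x

lemma integrableOn_P5F4 (φ : SchwartzMap ℝ ℝ) {lam : ℝ} (hlam : 0 < lam) :
    IntegrableOn (fun s => P5 s * F4 φ lam s) (Set.Ioi 0) := by
  refine Integrable.bdd_mul (integrableOn_F4_mul φ hlam).integrableOn ?_ (c := 1) (Eventually.of_forall fun x => ?_)
  · exact continuous_P5.aestronglyMeasurable
  · rw [Real.norm_eq_abs]; exact abs_P5_le x

lemma integral_key (φ : SchwartzMap ℝ ℝ) {lam : ℝ} (hlam : 0 < lam) :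
    ∫ s in Set.Ioi (0 : ℝ), (B1 s * F0 φ lam s - P5 s * F4 φ lam s) = φ 0 / 360 := by
  have hint : IntegrableOn (fun s => B1 s * F0 φ lam s - P5 s * F4 φ lam s) (Set.Ioi 0) :=
    (integrableOn_B1F0 φ hlam).sub (integrableOn_P5F4 φ hlam)
  have t1 : Tendsto (fun T : ℝ => ∫ s in (0 : ℝ)..T, (B1 s * F0 φ lam s - P5 s * F4 φ lam s))
      atTop (𝓝 (∫ s in Set.Ioi (0 : ℝ), (B1 s * F0 φ lam s - P5 s * F4 φ lam s))) :=
    intervalIntegral_tendsto_integral_Ioi 0 hint tendsto_id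
  have key : ∀ᶠ T in (atTop : Filter ℝ),
      (∫ s in (0 : ℝ)..T, (B1 s * F0 φ lam s - P5 s * F4 φ lam s))
        = Afun φ lam T - Afun φ lam 0 := by
    filter_upwards [eventually_ge_atTop (0 : ℝ)] with T hT
    refine intervalIntegral.integral_eq_sub_of_hasDeriv_right_of_le hT
      ((continuous_A φ lam).continuousOn)
      (fun x _ => (hasDerivWithinAt_A φ lam x).mono Set.Ioi_subset_Ici_self) ?_
    rw [intervalIntegrable_iff_integrableOn_Ioc_of_le hT]
    exact hint.mono_set Set.Ioc_subset_Ioi_self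
  have t2 : Tendsto (fun T : ℝ => Afun φ lam T - Afun φ lam 0) atTop
      (𝓝 (0 - Afun φ lam 0)) := (tendsto_A_atTop φ hlam).sub_const _
  have hval := tendsto_nhds_unique (Tendsto.congr' key t1) t2
  rw [hval]
  have hA0 : Afun φ lam 0 = -(φ 0) / 360 := by
    unfold Afun F0 F1 F2 F3 P2 P3 P4 P5
    rw [Int.fract_zero]
    norm_num
    ring
  rw [hA0]
  ring


lemma integrable_pow_mul_fun (ψ : SchwartzMap ℝ ℝ) (a : ℕ) :
    Integrable (fun x : ℝ => x ^ a * ψ x) := by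
  refine (ψ.integrable_pow_mul volume a).mono'
    ((continuous_pow a).mul ψ.continuous).aestronglyMeasurable
    (Eventually.of_forall fun x => ?_)
  exact le_of_eq (by simp [norm_mul, norm_pow])

def Gfun (φ : SchwartzMap ℝ ℝ) (u : ℝ) : ℝ :=
  12 * |u ^ 0 * d1 (d1 φ) u| + 8 * |u ^ 1 * d1 (d1 (d1 φ)) u|
    + |u ^ 2 * d1 (d1 (d1 (d1 φ))) u|

def Mconst (φ : SchwartzMap ℝ ℝ) : ℝ := ∫ u in Set.Ioi (0 : ℝ), Gfun φ u

lemma integrable_Gcomp (φ : SchwartzMap ℝ ℝ) {lam : ℝ} (hlam : 0 < lam) :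
    Integrable (fun s : ℝ => Gfun φ (lam * s)) := by
  have i2 := ((integrable_pow_mul_fun (d1 (d1 φ)) 0).abs.comp_mul_left' hlam.ne').const_mul
    (12 : ℝ)
  have i3 := ((integrable_pow_mul_fun (d1 (d1 (d1 φ))) 1).abs.comp_mul_left' hlam.ne').const_mul
    (8 : ℝ)
  have i4 := (integrable_pow_mul_fun (d1 (d1 (d1 (d1 φ)))) 2).abs.comp_mul_left' hlam.ne'
  exact (i2.add i3).add i4

lemma err_bound (φ : SchwartzMap ℝ ℝ) {lam : ℝ} (hlam : 0 < lam) :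
    |∫ s in Set.Ioi (0 : ℝ), P5 s * F4 φ lam s| ≤ lam * Mconst φ := by
  have hG : IntegrableOn (fun s : ℝ => lam ^ 2 * Gfun φ (lam * s)) (Set.Ioi 0) :=
    ((integrable_Gcomp φ hlam).const_mul (lam ^ 2)).integrableOn
  have habs : |∫ s in Set.Ioi (0 : ℝ), P5 s * F4 φ lam s|
      ≤ ∫ s in Set.Ioi (0 : ℝ), |P5 s * F4 φ lam s| := by
    have habs' := norm_integral_le_integral_norm (μ := volume.restrict (Set.Ioi (0:ℝ)))
      (f := fun s => P5 s * F4 φ lam s)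
    simp only [Real.norm_eq_abs] at habs'
    exact habs'
  have hpt : ∀ s ∈ Set.Ioi (0 : ℝ), |P5 s * F4 φ lam s| ≤ lam ^ 2 * Gfun φ (lam * s) := by
    intro s _
    set t1 : ℝ := 12 * lam ^ 2 * d1 (d1 φ) (lam * s) with ht1
    set t2 : ℝ := 8 * lam ^ 3 * s * d1 (d1 (d1 φ)) (lam * s) with ht2
    set t3 : ℝ := lam ^ 4 * s ^ 2 * d1 (d1 (d1 (d1 φ))) (lam * s) with ht3
    have e1 : |t1| = lam ^ 2 * (12 * |(lam * s) ^ 0 * d1 (d1 φ) (lam * s)|) := by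
      rw [ht1, show (12 : ℝ) * lam ^ 2 * d1 (d1 φ) (lam * s)
        = (lam ^ 2 * 12) * ((lam * s) ^ 0 * d1 (d1 φ) (lam * s)) from by ring, abs_mul,
        abs_of_pos (by positivity : (0:ℝ) < lam ^ 2 * 12)]
      ring
    have e2 : |t2| = lam ^ 2 * (8 * |(lam * s) ^ 1 * d1 (d1 (d1 φ)) (lam * s)|) := by
      rw [ht2, show (8 : ℝ) * lam ^ 3 * s * d1 (d1 (d1 φ)) (lam * s)
        = (lam ^ 2 * 8) * ((lam * s) ^ 1 * d1 (d1 (d1 φ)) (lam * s)) from by ring, abs_mul,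
        abs_of_pos (by positivity : (0:ℝ) < lam ^ 2 * 8)]
      ring
    have e3 : |t3| = lam ^ 2 * |(lam * s) ^ 2 * d1 (d1 (d1 (d1 φ))) (lam * s)| := by
      rw [ht3, show lam ^ 4 * s ^ 2 * d1 (d1 (d1 (d1 φ))) (lam * s)
        = lam ^ 2 * ((lam * s) ^ 2 * d1 (d1 (d1 (d1 φ))) (lam * s)) from by ring, abs_mul,
        abs_of_pos (by positivity : (0:ℝ) < lam ^ 2)]
    have hF4 : |F4 φ lam s| ≤ lam ^ 2 * Gfun φ (lam * s) := by
      have h12 : |t1 + t2| ≤ |t1| + |t2| := abs_add_le _ _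
      have h123 : |t1 + t2 + t3| ≤ |t1| + |t2| + |t3| :=
        le_trans (abs_add_le _ _) (by linarith)
      have : F4 φ lam s = t1 + t2 + t3 := by rw [ht1, ht2, ht3]; unfold F4; ring
      rw [this]
      calc |t1 + t2 + t3| ≤ |t1| + |t2| + |t3| := h123
        _ = lam ^ 2 * Gfun φ (lam * s) := by rw [e1, e2, e3]; unfold Gfun; ring
    calc |P5 s * F4 φ lam s| = |P5 s| * |F4 φ lam s| := abs_mul _ _
      _ ≤ 1 * |F4 φ lam s| := mul_le_mul_of_nonneg_right (abs_P5_le s) (abs_nonneg _)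
      _ = |F4 φ lam s| := one_mul _
      _ ≤ lam ^ 2 * Gfun φ (lam * s) := hF4
  have hmono : ∫ s in Set.Ioi (0 : ℝ), |P5 s * F4 φ lam s|
      ≤ ∫ s in Set.Ioi (0 : ℝ), lam ^ 2 * Gfun φ (lam * s) :=
    setIntegral_mono_on (integrableOn_P5F4 φ hlam).abs hG measurableSet_Ioi hpt
  have hchg : ∫ s in Set.Ioi (0 : ℝ), lam ^ 2 * Gfun φ (lam * s) = lam * Mconst φ := by
    rw [MeasureTheory.integral_const_mul, integral_comp_mul_left_Ioi (Gfun φ) 0 hlam, mul_zero,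
      smul_eq_mul]
    unfold Mconst
    field_simp
  linarith

end CasimirAux

/-- The regularized Casimir integral: for every Schwartz function `φ` with `φ(0) = 1`,
`∫_0^∞ s² g(s) φ(λs) ds → -π/360` as the cut-off ratio `λ → 0⁺`. -/
theorem casimir_energy_limit (φ : SchwartzMap ℝ ℝ) (hφ : φ 0 = 1) :
    Filter.Tendsto
      (fun lam : ℝ => ∫ s in Set.Ioi (0 : ℝ), s ^ 2 * g s * φ (lam * s))
      (𝓝[>] 0) (𝓝 (-Real.pi / 360)) := by
  have key : ∀ lam ∈ Set.Ioi (0 : ℝ),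
      (∫ s in Set.Ioi (0 : ℝ), s ^ 2 * g s * φ (lam * s))
        = -Real.pi / 360 - Real.pi * ∫ s in Set.Ioi (0 : ℝ), P5 s * F4 φ lam s := by
    intro lam hlam
    rw [Set.mem_Ioi] at hlam
    have hae : ∀ᵐ s ∂(volume.restrict (Set.Ioi (0 : ℝ))),
        s ^ 2 * g s * φ (lam * s) = -Real.pi * (B1 s * F0 φ lam s) := by
      refine ae_restrict_of_ae ?_
      have hz : volume (Set.range ((↑) : ℤ → ℝ)) = 0 :=
        Set.Countable.measure_zero (Set.countable_range _) _
      filter_upwards [measure_eq_zero_iff_ae_notMem.mp hz] with s hs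
      have hni : ¬ ∃ n : ℤ, (n : ℝ) = s := by
        rintro ⟨n, hn⟩; exact hs ⟨n, hn⟩
      unfold g
      rw [if_neg hni]
      unfold B1 F0
      ring
    rw [integral_congr_ae hae, MeasureTheory.integral_const_mul]
    have hsplit : ∫ s in Set.Ioi (0 : ℝ), B1 s * F0 φ lam s
        = φ 0 / 360 + ∫ s in Set.Ioi (0 : ℝ), P5 s * F4 φ lam s := by
      have h1 := integral_key φ hlam
      rw [integral_sub (integrableOn_B1F0 φ hlam) (integrableOn_P5F4 φ hlam)] at h1
      linarith
    rw [hsplit, hφ]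
    ring
  have herr : Tendsto (fun lam : ℝ => ∫ s in Set.Ioi (0 : ℝ), P5 s * F4 φ lam s)
      (𝓝[>] 0) (𝓝 0) := by
    have hub : Tendsto (fun lam : ℝ => lam * Mconst φ) (𝓝[>] (0:ℝ)) (𝓝 0) := by
      have := (tendsto_id.mono_left (nhdsWithin_le_nhds :
        (𝓝[>] (0:ℝ)) ≤ 𝓝 0)).mul_const (Mconst φ)
      simpa using this
    have hlb : Tendsto (fun lam : ℝ => -(lam * Mconst φ)) (𝓝[>] (0:ℝ)) (𝓝 0) := by
      simpa using hub.neg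
    refine tendsto_of_tendsto_of_tendsto_of_le_of_le' hlb hub ?_ ?_
    · filter_upwards [self_mem_nhdsWithin] with lam hlam
      exact (abs_le.mp (err_bound φ (Set.mem_Ioi.mp hlam))).1
    · filter_upwards [self_mem_nhdsWithin] with lam hlam
      exact (abs_le.mp (err_bound φ (Set.mem_Ioi.mp hlam))).2
  have hT : Tendsto (fun lam : ℝ => -Real.pi / 360
      - Real.pi * ∫ s in Set.Ioi (0 : ℝ), P5 s * F4 φ lam s)
      (𝓝[>] 0) (𝓝 (-Real.pi / 360 - Real.pi * 0)) :=
    tendsto_const_nhds.sub (herr.const_mul Real.pi)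
  have heq : (fun lam : ℝ => -Real.pi / 360
      - Real.pi * ∫ s in Set.Ioi (0 : ℝ), P5 s * F4 φ lam s)
      =ᶠ[𝓝[>] (0:ℝ)] fun lam : ℝ => ∫ s in Set.Ioi (0 : ℝ), s ^ 2 * g s * φ (lam * s) := by
    filter_upwards [self_mem_nhdsWithin] with lam hlam
    exact (key lam hlam).symm
  have final := Tendsto.congr' heq hT
  convert final using 2
  ring
end
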